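/- arXiv:2002.07475 — 4 statements merged into one kernel-verified Lean document; each statement's English description precedes it below -/
import Mathlib

section
/- Let f be a real additive function such that Σ_{p : f(p)≠0} 1/p < ∞. Then Σ_{m ≥ 1} h_f(m)/m = ∏_p 1/(1 − w_p), both sides being finite; consequently the function F(y) := ∏_p (1 − w_p) · Σ_{m : f(m) ≤ y} h_f(m)/m is a distribution function (non-decreasing, with limit 0 at −∞ and 1 at +∞). -/
open Filter Topology Finset MeasureTheory
open scoped Classical

noncomputable section

/-- A real additive arithmetic function. -/
def IsAdditive (f : ℕ → ℝ) : Prop :=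
  ∀ m n : ℕ, 0 < m → 0 < n → Nat.Coprime m n → f (m * n) = f m + f n

/-- A real strongly additive arithmetic function. -/
def IsStronglyAdditive (f : ℕ → ℝ) : Prop :=
  IsAdditive f ∧ ∀ p ν : ℕ, p.Prime → 1 ≤ ν → f (p ^ ν) = f p

/-- Convergence of the two Erdős–Wintner series. -/
def EWConv (f : ℕ → ℝ) : Prop :=
  Summable (fun p : Nat.Primes => min 1 (f p ^ 2) / (p : ℝ)) ∧
  ∃ ℓ : ℝ, Tendsto (fun N : ℕ =>
      ∑ p ∈ (Finset.range N).filter (fun p => Nat.Prime p ∧ |f p| ≤ 1), f p / (p : ℝ))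
    atTop (𝓝 ℓ)

/-- The series over primes with f(p) ≠ 0 of 1/p. -/
def DivergentCase (f : ℕ → ℝ) : Prop :=
  ¬ Summable (fun p : Nat.Primes => if f (p : ℕ) ≠ 0 then (1 : ℝ) / (p : ℕ) else 0)

def EtaBound (f : ℕ → ℝ) (η : ℝ → ℝ) : Prop :=
  Continuous η ∧ Antitone η ∧ Tendsto η atTop (𝓝 0) ∧
  (∀ y : ℝ, 1 ≤ y → ∃ ℓ : ℝ,
    Tendsto (fun N : ℕ =>
        ∑ p ∈ (Finset.range N).filter (fun p => Nat.Prime p ∧ y < (p : ℝ) ∧ |f p| ≤ 1),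
          f p / (p : ℝ)) atTop (𝓝 ℓ) ∧ |ℓ| ≤ η y) ∧
  (∀ y : ℝ, 1 ≤ y →
    (∑' n : ℕ, if IsPrimePow n ∧ y < (n : ℝ) then min 1 (f n ^ 2) / (n : ℝ) else 0) ≤ η y)

/-- The truncated additive function f_R. -/
def fR (f : ℕ → ℝ) (R : ℝ) (n : ℕ) : ℝ :=
  ∑ p ∈ n.primeFactors,
    (if ((p ^ (n.factorization p) : ℕ) : ℝ) ≤ R ∨ |f (p ^ (n.factorization p))| ≤ 1
      then f (p ^ (n.factorization p)) else 0)

/-- B_f(v) := sqrt(2 + Σ_{p^ν ≤ v} f(p^ν)²/p^ν). -/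
def Bf (f : ℕ → ℝ) (v : ℝ) : ℝ :=
  Real.sqrt (2 + ∑ n ∈ (Finset.Icc 2 ⌊v⌋₊).filter IsPrimePow, f n ^ 2 / (n : ℝ))

/-- π_k(x) = #{n ≤ x : ω(n) = k}. -/
def pik (x : ℝ) (k : ℕ) : ℕ :=
  ((Finset.Icc 1 ⌊x⌋₊).filter (fun n => n.primeFactors.card = k)).card

/-- The empirical distribution function. -/
def Fx (f : ℕ → ℝ) (x : ℝ) (y : ℝ) : ℝ :=
  (((Finset.Icc 1 ⌊x⌋₊).filter (fun n => f n ≤ y)).card : ℝ) / x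

def uf (f : ℕ → ℝ) (m : ℕ) : ℝ :=
  if ∀ p ∈ m.primeFactors, f (p ^ (m.factorization p)) ≠ 0 then 1 else 0

def vf (f : ℕ → ℝ) (d : ℕ) : ℝ :=
  if ∀ p ∈ d.primeFactors, f (p ^ (d.factorization p)) = 0 then 1 else 0

def wp (f : ℕ → ℝ) (p : ℕ) : ℝ :=
  (1 - 1 / (p : ℝ)) * ∑' ν : ℕ, uf f (p ^ (ν + 1)) / (p : ℝ) ^ (ν + 1)

def hf (f : ℕ → ℝ) (m : ℕ) : ℝ :=
  uf f m * ∏ p ∈ m.primeFactors, (1 - 1 / (p : ℝ)) / (1 - wp f p)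

def alphaf (f : ℕ → ℝ) (y : ℝ) : ℝ :=
  ∑' p : Nat.Primes, if y < ((p : ℕ) : ℝ) then uf f (p : ℕ) / ((p : ℕ) : ℝ) else 0

def betaf (f : ℕ → ℝ) (y : ℝ) : ℝ :=
  (1 / Real.log y) * ∫ t in (1:ℝ)..y, alphaf f t / t

def Flim (f : ℕ → ℝ) (y : ℝ) : ℝ :=
  (∏' p : Nat.Primes, (1 - wp f (p : ℕ))) *
    ∑' m : ℕ, if 1 ≤ m ∧ f m ≤ y then hf f m / m else 0

set_option linter.unusedSectionVars false

section Aux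

variable (f : ℕ → ℝ)

lemma uf_nonneg (m : ℕ) : 0 ≤ uf f m := by unfold uf; split <;> norm_num

lemma uf_le_one (m : ℕ) : uf f m ≤ 1 := by unfold uf; split <;> norm_num

lemma uf_one : uf f 1 = 1 := by simp [uf]

variable {p : ℕ} (hp : p.Prime)

include hp

lemma uf_prime_pow {k : ℕ} (hk : k ≠ 0) :
    uf f (p ^ k) = if f (p ^ k) ≠ 0 then 1 else 0 := by
  unfold uf
  rw [Nat.primeFactors_prime_pow hk hp, Nat.Prime.factorization_pow hp]
  simp

lemma hf_prime_pow {k : ℕ} (hk : k ≠ 0) :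
    hf f (p ^ k) = uf f (p ^ k) * ((1 - 1 / (p : ℝ)) / (1 - wp f p)) := by
  unfold hf
  rw [Nat.primeFactors_prime_pow hk hp, Finset.prod_singleton]

lemma Sp_summable :
    Summable (fun ν : ℕ => uf f (p ^ (ν + 1)) / (p : ℝ) ^ (ν + 1)) := by
  have h2 : (2:ℝ) ≤ (p:ℝ) := by exact_mod_cast hp.two_le
  have h0 : (0:ℝ) < (p:ℝ) := by linarith
  have hgeo : Summable (fun ν : ℕ => (1 / (p:ℝ)) ^ (ν + 1)) := by
    apply Summable.comp_injective (f := fun ν : ℕ => (1 / (p:ℝ)) ^ ν) ?_ (add_left_injective 1)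
    exact summable_geometric_of_lt_one (by positivity) (by rw [div_lt_one h0]; linarith)
  refine Summable.of_nonneg_of_le (fun ν => div_nonneg (uf_nonneg f _) (by positivity)) (fun ν => ?_) hgeo
  rw [div_pow, one_pow]
  exact div_le_div_of_nonneg_right (uf_le_one f _) (by positivity) |>.trans_eq (by norm_num)


lemma Sp_nonneg : 0 ≤ ∑' ν : ℕ, uf f (p ^ (ν + 1)) / (p : ℝ) ^ (ν + 1) :=
  tsum_nonneg fun ν => div_nonneg (uf_nonneg f _) (by positivity)

lemma geo_summable : Summable (fun ν : ℕ => (1 / (p:ℝ)) ^ (ν + 1)) := by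
  have h2 : (2:ℝ) ≤ (p:ℝ) := by exact_mod_cast hp.two_le
  have h0 : (0:ℝ) < (p:ℝ) := by linarith
  apply Summable.comp_injective (f := fun ν : ℕ => (1 / (p:ℝ)) ^ ν) ?_ (add_left_injective 1)
  exact summable_geometric_of_lt_one (by positivity) (by rw [div_lt_one h0]; linarith)

lemma geo_tsum : ∑' ν : ℕ, (1 / (p:ℝ)) ^ (ν + 1) = (1 - 1 / (p:ℝ))⁻¹ * (1 / (p:ℝ)) := by
  have h2 : (2:ℝ) ≤ (p:ℝ) := by exact_mod_cast hp.two_le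
  have h0 : (0:ℝ) < (p:ℝ) := by linarith
  calc ∑' ν : ℕ, (1 / (p:ℝ)) ^ (ν + 1) = ∑' ν : ℕ, (1 / (p:ℝ)) ^ ν * (1 / (p:ℝ)) := by
        simp [pow_succ]
    _ = (∑' ν : ℕ, (1 / (p:ℝ)) ^ ν) * (1 / (p:ℝ)) := tsum_mul_right
    _ = (1 - 1 / (p:ℝ))⁻¹ * (1 / (p:ℝ)) := by
        rw [tsum_geometric_of_lt_one (by positivity) (by rw [div_lt_one h0]; linarith)]

lemma wp_nonneg : 0 ≤ wp f p := by
  have h2 : (2:ℝ) ≤ (p:ℝ) := by exact_mod_cast hp.two_le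
  have h1 : (1:ℝ) / (p:ℝ) ≤ 1 / 2 := by
    apply div_le_div_of_nonneg_left <;> linarith
  exact mul_nonneg (by linarith) (Sp_nonneg f hp)

lemma wp_le_inv : wp f p ≤ 1 / (p:ℝ) := by
  have h2 : (2:ℝ) ≤ (p:ℝ) := by exact_mod_cast hp.two_le
  have h1 : (1:ℝ) / (p:ℝ) ≤ 1 / 2 := by
    apply div_le_div_of_nonneg_left <;> linarith
  have hS : (∑' ν : ℕ, uf f (p ^ (ν + 1)) / (p : ℝ) ^ (ν + 1)) ≤
      ∑' ν : ℕ, (1 / (p:ℝ)) ^ (ν + 1) := by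
    refine Summable.tsum_le_tsum (fun ν => ?_) (Sp_summable f hp) (geo_summable hp)
    rw [div_pow, one_pow]
    exact div_le_div_of_nonneg_right (uf_le_one f _) (by positivity) |>.trans_eq (by norm_num)
  calc wp f p ≤ (1 - 1 / (p:ℝ)) * ((1 - 1 / (p:ℝ))⁻¹ * (1 / (p:ℝ))) := by
        rw [wp, ← geo_tsum hp]
        exact mul_le_mul_of_nonneg_left hS (by linarith)
    _ = 1 / (p:ℝ) := by
        rw [← mul_assoc, mul_inv_cancel₀ (by linarith), one_mul]

lemma one_sub_wp_pos : 0 < 1 - wp f p := by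
  have h2 : (2:ℝ) ≤ (p:ℝ) := by exact_mod_cast hp.two_le
  have h1 : (1:ℝ) / (p:ℝ) ≤ 1 / 2 := by
    apply div_le_div_of_nonneg_left <;> linarith
  have := wp_le_inv f hp
  linarith

lemma wp_le_half : wp f p ≤ 1 / 2 := by
  have h2 : (2:ℝ) ≤ (p:ℝ) := by exact_mod_cast hp.two_le
  have h1 : (1:ℝ) / (p:ℝ) ≤ 1 / 2 := by
    apply div_le_div_of_nonneg_left <;> linarith
  exact (wp_le_inv f hp).trans h1

lemma wp_le_bound :
    wp f p ≤ (if f p ≠ 0 then 1 / (p:ℝ) else 0) + 2 / (p:ℝ) ^ 2 := by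
  have h2 : (2:ℝ) ≤ (p:ℝ) := by exact_mod_cast hp.two_le
  have h0 : (0:ℝ) < (p:ℝ) := by linarith
  have hSsum := Sp_summable f hp
  have htail : Summable (fun ν : ℕ => uf f (p ^ (ν + 1 + 1)) / (p : ℝ) ^ (ν + 1 + 1)) :=
    hSsum.comp_injective (add_left_injective 1)
  have hgeo2 : Summable (fun ν : ℕ => (1 / (p:ℝ)) ^ (ν + 1 + 1)) :=
    (geo_summable hp).comp_injective (add_left_injective 1)
  have hSp : (∑' ν : ℕ, uf f (p ^ (ν + 1)) / (p : ℝ) ^ (ν + 1)) =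
      uf f (p ^ 1) / (p:ℝ) ^ 1 +
      ∑' ν : ℕ, uf f (p ^ (ν + 1 + 1)) / (p : ℝ) ^ (ν + 1 + 1) := by
    simpa using Summable.tsum_eq_zero_add hSsum
  have htail_le : (∑' ν : ℕ, uf f (p ^ (ν + 1 + 1)) / (p : ℝ) ^ (ν + 1 + 1)) ≤ 2 / (p:ℝ) ^ 2 := by
    have h1 : (∑' ν : ℕ, uf f (p ^ (ν + 1 + 1)) / (p : ℝ) ^ (ν + 1 + 1)) ≤
        ∑' ν : ℕ, (1 / (p:ℝ)) ^ (ν + 1 + 1) := by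
      refine Summable.tsum_le_tsum (fun ν => ?_) htail hgeo2
      rw [div_pow, one_pow]
      exact div_le_div_of_nonneg_right (uf_le_one f _) (by positivity) |>.trans_eq (by norm_num)
    have h3 : (∑' ν : ℕ, (1 / (p:ℝ)) ^ (ν + 1 + 1)) ≤ 2 / (p:ℝ) ^ 2 := by
      have : (∑' ν : ℕ, (1 / (p:ℝ)) ^ (ν + 1 + 1)) =
          (∑' ν : ℕ, (1 / (p:ℝ)) ^ (ν + 1)) * (1 / (p:ℝ)) := by
        rw [← tsum_mul_right]
        simp [pow_succ]
      rw [this, geo_tsum hp]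
      have hq : (1 - 1/(p:ℝ))⁻¹ ≤ 2 := by
        have h1 : (1:ℝ)/(p:ℝ) ≤ 1/2 := by apply div_le_div_of_nonneg_left <;> linarith
        rw [show (2:ℝ) = ((1:ℝ)/2)⁻¹ by norm_num]
        apply inv_anti₀ (by norm_num) (by linarith)
      have hp2 : (0:ℝ) < 1/(p:ℝ) := by positivity
      calc (1 - 1/(p:ℝ))⁻¹ * (1/(p:ℝ)) * (1/(p:ℝ)) ≤ 2 * (1/(p:ℝ)) * (1/(p:ℝ)) := by
            apply mul_le_mul_of_nonneg_right (mul_le_mul_of_nonneg_right hq hp2.le) hp2.le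
        _ = 2 / (p:ℝ)^2 := by field_simp
    exact h1.trans h3
  have huf : uf f (p ^ 1) / (p:ℝ) ^ 1 = (if f p ≠ 0 then 1 / (p:ℝ) else 0) := by
    rw [uf_prime_pow f hp one_ne_zero, pow_one, pow_one]
    split <;> simp
  have hwS : wp f p ≤ ∑' ν : ℕ, uf f (p ^ (ν + 1)) / (p : ℝ) ^ (ν + 1) := by
    rw [wp]
    exact mul_le_of_le_one_left (Sp_nonneg f hp) (by rw [sub_le_self_iff]; positivity)
  rw [hSp, huf] at hwS
  linarith

omit hp

lemma hf_nonneg (m : ℕ) : 0 ≤ hf f m := by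
  refine mul_nonneg (uf_nonneg f m) (Finset.prod_nonneg fun q hq => ?_)
  have hq' : q.Prime := Nat.prime_of_mem_primeFactors hq
  have h2 : (2:ℝ) ≤ (q:ℝ) := by exact_mod_cast hq'.two_le
  have h1 : (1:ℝ)/(q:ℝ) ≤ 1/2 := by apply div_le_div_of_nonneg_left <;> linarith
  exact div_nonneg (by linarith) (one_sub_wp_pos f hq').le

include hp

lemma ratio_nonneg : 0 ≤ (1 - 1/(p:ℝ)) / (1 - wp f p) := by
  have h2 : (2:ℝ) ≤ (p:ℝ) := by exact_mod_cast hp.two_le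
  have h1 : (1:ℝ)/(p:ℝ) ≤ 1/2 := by apply div_le_div_of_nonneg_left <;> linarith
  exact div_nonneg (by linarith) (one_sub_wp_pos f hp).le

lemma ratio_le_one : (1 - 1/(p:ℝ)) / (1 - wp f p) ≤ 1 := by
  have h2 : (2:ℝ) ≤ (p:ℝ) := by exact_mod_cast hp.two_le
  have h1 : (1:ℝ)/(p:ℝ) ≤ 1/2 := by apply div_le_div_of_nonneg_left <;> linarith
  rw [div_le_one (one_sub_wp_pos f hp)]
  have := wp_le_inv f hp
  linarith

omit hp

/-- The summand function. -/
def gEW (m : ℕ) : ℝ := if 1 ≤ m then hf f m / m else 0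

lemma gEW_zero : gEW f 0 = 0 := by simp [gEW]

lemma gEW_one : gEW f 1 = 1 := by simp [gEW, hf, uf_one]

lemma gEW_nonneg (m : ℕ) : 0 ≤ gEW f m := by
  unfold gEW
  split
  · exact div_nonneg (hf_nonneg f m) (Nat.cast_nonneg m)
  · exact le_refl 0

include hp

lemma gEW_pow_succ (e : ℕ) :
    gEW f (p ^ (e + 1)) =
      ((1 - 1/(p:ℝ)) / (1 - wp f p)) * (uf f (p ^ (e + 1)) / (p:ℝ) ^ (e + 1)) := by
  have hpos : 1 ≤ p ^ (e + 1) := Nat.one_le_pow _ _ hp.pos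
  rw [gEW, if_pos hpos, hf_prime_pow f hp (Nat.succ_ne_zero e)]
  push_cast
  ring

lemma gEW_pow_le (e : ℕ) : gEW f (p ^ e) ≤ (1/(p:ℝ)) ^ e := by
  cases e with
  | zero => simp [gEW_one]
  | succ e =>
    rw [gEW_pow_succ f hp]
    have h2 : (2:ℝ) ≤ (p:ℝ) := by exact_mod_cast hp.two_le
    calc ((1 - 1/(p:ℝ)) / (1 - wp f p)) * (uf f (p ^ (e+1)) / (p:ℝ) ^ (e+1))
        ≤ 1 * (1 / (p:ℝ) ^ (e+1)) := by
          apply mul_le_mul (ratio_le_one f hp)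
          · exact div_le_div_of_nonneg_right (uf_le_one f _) (by positivity) |>.trans_eq
              (by norm_num)
          · exact div_nonneg (uf_nonneg f _) (by positivity)
          · norm_num
      _ = (1/(p:ℝ)) ^ (e+1) := by rw [one_mul, div_pow, one_pow]

lemma gEW_pow_summable : Summable (fun e : ℕ => gEW f (p ^ e)) := by
  have h2 : (2:ℝ) ≤ (p:ℝ) := by exact_mod_cast hp.two_le
  refine Summable.of_nonneg_of_le (fun e => gEW_nonneg f _) (fun e => gEW_pow_le f hp e) ?_
  exact summable_geometric_of_lt_one (by positivity)
    (by rw [div_lt_one (by linarith)]; linarith)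

lemma gEW_pow_tsum : ∑' e : ℕ, gEW f (p ^ e) = 1 / (1 - wp f p) := by
  have hsum := gEW_pow_summable f hp
  have h0 := Summable.tsum_eq_zero_add hsum
  rw [pow_zero, gEW_one] at h0
  have h1 : ∑' e : ℕ, gEW f (p ^ (e + 1)) =
      ((1 - 1/(p:ℝ)) / (1 - wp f p)) * ∑' e : ℕ, uf f (p ^ (e + 1)) / (p:ℝ) ^ (e + 1) := by
    rw [← tsum_mul_left]
    exact tsum_congr fun e => gEW_pow_succ f hp e
  have h2 : ((1 - 1/(p:ℝ)) / (1 - wp f p)) *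
      (∑' e : ℕ, uf f (p ^ (e + 1)) / (p:ℝ) ^ (e + 1)) = wp f p / (1 - wp f p) := by
    rw [wp]; ring
  rw [h0, h1, h2]
  have h3 := one_sub_wp_pos f hp
  field_simp
  ring

omit hp

lemma uf_mul {m n : ℕ} (hm : m ≠ 0) (hn : n ≠ 0) (h : Nat.Coprime m n) :
    uf f (m * n) = uf f m * uf f n := by
  have hd : Disjoint m.primeFactors n.primeFactors := Nat.Coprime.disjoint_primeFactors h
  have hpf : (m * n).primeFactors = m.primeFactors ∪ n.primeFactors := Nat.primeFactors_mul hm hn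
  have hfm : ∀ q ∈ m.primeFactors, (m * n).factorization q = m.factorization q := by
    intro q hq
    rw [Nat.factorization_mul hm hn, Finsupp.add_apply]
    have h0 : q ∉ n.primeFactors := Finset.disjoint_left.mp hd hq
    rw [← Nat.support_factorization, Finsupp.notMem_support_iff] at h0
    omega
  have hfn : ∀ q ∈ n.primeFactors, (m * n).factorization q = n.factorization q := by
    intro q hq
    rw [Nat.factorization_mul hm hn, Finsupp.add_apply]
    have h0 : q ∉ m.primeFactors := Finset.disjoint_right.mp hd hq
    rw [← Nat.support_factorization, Finsupp.notMem_support_iff] at h0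
    omega
  have key : (∀ q ∈ (m * n).primeFactors, f (q ^ (m * n).factorization q) ≠ 0) ↔
      ((∀ q ∈ m.primeFactors, f (q ^ m.factorization q) ≠ 0) ∧
       (∀ q ∈ n.primeFactors, f (q ^ n.factorization q) ≠ 0)) := by
    rw [hpf, Finset.forall_mem_union]
    constructor
    · rintro ⟨h1, h2⟩
      refine ⟨fun q hq => ?_, fun q hq => ?_⟩
      · rw [← hfm q hq]; exact h1 q hq
      · rw [← hfn q hq]; exact h2 q hq
    · rintro ⟨h1, h2⟩
      refine ⟨fun q hq => ?_, fun q hq => ?_⟩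
      · rw [hfm q hq]; exact h1 q hq
      · rw [hfn q hq]; exact h2 q hq
  simp only [uf]
  rw [if_congr key rfl rfl]
  by_cases h1 : (∀ q ∈ m.primeFactors, f (q ^ m.factorization q) ≠ 0) <;>
    by_cases h2 : (∀ q ∈ n.primeFactors, f (q ^ n.factorization q) ≠ 0)
  · rw [if_pos ⟨h1, h2⟩, if_pos h1, if_pos h2]; norm_num
  · rw [if_neg (fun hc => h2 hc.2), if_pos h1, if_neg h2]; norm_num
  · rw [if_neg (fun hc => h1 hc.1), if_neg h1, if_pos h2]; norm_num
  · rw [if_neg (fun hc => h1 hc.1), if_neg h1, if_neg h2]; norm_num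

lemma hf_mul {m n : ℕ} (hm : m ≠ 0) (hn : n ≠ 0) (h : Nat.Coprime m n) :
    hf f (m * n) = hf f m * hf f n := by
  have hd : Disjoint m.primeFactors n.primeFactors := Nat.Coprime.disjoint_primeFactors h
  unfold hf
  rw [uf_mul f hm hn h, Nat.primeFactors_mul hm hn, Finset.prod_union hd]
  ring

lemma gEW_mul {m n : ℕ} (h : Nat.Coprime m n) : gEW f (m * n) = gEW f m * gEW f n := by
  rcases Nat.eq_zero_or_pos m with rfl | hm
  · simp [gEW_zero]
  rcases Nat.eq_zero_or_pos n with rfl | hn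
  · simp [gEW_zero]
  have hm' : 1 ≤ m := hm
  have hn' : 1 ≤ n := hn
  have hmn : 1 ≤ m * n := Nat.one_le_iff_ne_zero.mpr (Nat.mul_ne_zero hm.ne' hn.ne')
  simp only [gEW, if_pos hm', if_pos hn', if_pos hmn]
  rw [hf_mul f hm.ne' hn.ne' h]
  push_cast
  rw [mul_div_mul_comm]

lemma gEW_norm_pow_summable {q : ℕ} (hq : q.Prime) :
    Summable (fun e : ℕ => ‖gEW f (q ^ e)‖) :=
  (gEW_pow_summable f hq).congr fun e => (Real.norm_of_nonneg (gEW_nonneg f _)).symm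

/-- The summable bound for `wp` over primes. -/
def bnd (n : ℕ) : ℝ :=
  Set.indicator {q : ℕ | Nat.Prime q} (fun q => if f q ≠ 0 then 1 / (q:ℝ) else 0) n +
    (if 2 ≤ n then 2 / (n:ℝ) ^ 2 else 0)

lemma bnd_nonneg (n : ℕ) : 0 ≤ bnd f n := by
  refine add_nonneg (Set.indicator_nonneg (fun a _ => ?_) n) (by split <;> positivity)
  split <;> positivity

lemma bnd_summable
    (hfin : Summable (fun p : Nat.Primes => if f (p : ℕ) ≠ 0 then (1:ℝ) / ((p:ℕ):ℝ) else 0)) :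
    Summable (bnd f) := by
  have h1 : Summable (Set.indicator {q : ℕ | Nat.Prime q}
      (fun q => if f q ≠ 0 then 1 / (q:ℝ) else 0)) :=
    summable_subtype_iff_indicator.mp hfin
  have h2 : Summable (fun n : ℕ => if 2 ≤ n then 2 / (n:ℝ) ^ 2 else 0) := by
    have hs : Summable (fun n : ℕ => 2 * (1 / (n:ℝ) ^ 2)) :=
      (Real.summable_one_div_nat_pow.mpr one_lt_two).mul_left 2
    refine Summable.of_nonneg_of_le (fun n => by split <;> positivity) (fun n => ?_) hs
    split
    · rw [mul_one_div]
    · positivity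
  exact h1.add h2

lemma wp_le_bnd {q : ℕ} (hq : q.Prime) : wp f q ≤ bnd f q := by
  have h := wp_le_bound f hq
  unfold bnd
  rw [Set.indicator_of_mem (by exact hq), if_pos hq.two_le]
  exact h

lemma prod_bound
    (hfin : Summable (fun p : Nat.Primes => if f (p : ℕ) ≠ 0 then (1:ℝ) / ((p:ℕ):ℝ) else 0))
    (s : Finset ℕ) :
    ∏ p ∈ s.filter Nat.Prime, (1 / (1 - wp f p)) ≤ Real.exp (2 * ∑' n : ℕ, bnd f n) := by
  have step1 : ∀ q ∈ s.filter Nat.Prime, 1 / (1 - wp f q) ≤ Real.exp (2 * wp f q) := by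
    intro q hq
    have hq' : q.Prime := (Finset.mem_filter.mp hq).2
    have hw0 := wp_nonneg f hq'
    have hw2 := wp_le_half f hq'
    have hpos := one_sub_wp_pos f hq'
    have hle : 1 / (1 - wp f q) ≤ 1 + 2 * wp f q := by
      rw [div_le_iff₀ hpos]; nlinarith
    have hexp : 1 + 2 * wp f q ≤ Real.exp (2 * wp f q) := by
      have := Real.add_one_le_exp (2 * wp f q); linarith
    linarith
  calc ∏ p ∈ s.filter Nat.Prime, (1 / (1 - wp f p))
      ≤ ∏ p ∈ s.filter Nat.Prime, Real.exp (2 * wp f p) := by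
        refine Finset.prod_le_prod (fun q hq => ?_) step1
        exact div_nonneg one_pos.le (one_sub_wp_pos f (Finset.mem_filter.mp hq).2).le
    _ = Real.exp (∑ p ∈ s.filter Nat.Prime, 2 * wp f p) := (Real.exp_sum _ _).symm
    _ ≤ Real.exp (2 * ∑' n : ℕ, bnd f n) := by
        apply Real.exp_le_exp.mpr
        have hsum : ∑ p ∈ s.filter Nat.Prime, wp f p ≤
            ∑ p ∈ s.filter Nat.Prime, bnd f p :=
          Finset.sum_le_sum fun q hq => wp_le_bnd f (Finset.mem_filter.mp hq).2
        have htsum : ∑ p ∈ s.filter Nat.Prime, bnd f p ≤ ∑' n : ℕ, bnd f n :=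
          Summable.sum_le_tsum _ (fun i _ => bnd_nonneg f i) (bnd_summable f hfin)
        rw [← Finset.mul_sum]
        linarith

lemma gEW_summable
    (hfin : Summable (fun p : Nat.Primes => if f (p : ℕ) ≠ 0 then (1:ℝ) / ((p:ℕ):ℝ) else 0)) :
    Summable (gEW f) := by
  refine summable_of_sum_range_le (c := Real.exp (2 * ∑' n : ℕ, bnd f n))
    (gEW_nonneg f) (fun N => ?_)
  obtain ⟨hS, hP⟩ := EulerProduct.summable_and_hasSum_factoredNumbers_prod_filter_prime_tsum
    (f := gEW f) (gEW_one f) (fun {a b} hab => gEW_mul f hab)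
    (fun {q} hq => gEW_norm_pow_summable f hq) (Finset.range N)
  have hind : ∀ m ∈ Finset.range N,
      gEW f m = Set.indicator (Nat.factoredNumbers (Finset.range N)) (gEW f) m := by
    intro m hm
    rcases Nat.eq_zero_or_pos m with rfl | hm0
    · rw [gEW_zero, Set.indicator_apply]
      split
      · exact (gEW_zero f).symm
      · rfl
    · rw [Set.indicator_of_mem]
      rw [Nat.mem_factoredNumbers]
      refine ⟨hm0.ne', fun q hq => ?_⟩
      have hdvd : q ∣ m := Nat.dvd_of_mem_primeFactorsList hq
      exact Finset.mem_range.mpr (lt_of_le_of_lt (Nat.le_of_dvd hm0 hdvd) (Finset.mem_range.mp hm))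
  have hS' : Summable (fun m : Nat.factoredNumbers (Finset.range N) => gEW f ↑m) := hS.of_norm
  have hind_sum : Summable (Set.indicator (Nat.factoredNumbers (Finset.range N)) (gEW f)) :=
    summable_subtype_iff_indicator.mp hS'
  calc ∑ m ∈ Finset.range N, gEW f m
      = ∑ m ∈ Finset.range N, Set.indicator (Nat.factoredNumbers (Finset.range N)) (gEW f) m :=
        Finset.sum_congr rfl hind
    _ ≤ ∑' m : ℕ, Set.indicator (Nat.factoredNumbers (Finset.range N)) (gEW f) m :=
        Summable.sum_le_tsum _ (fun i _ => Set.indicator_nonneg (fun a _ => gEW_nonneg f a) i)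
          hind_sum
    _ = ∑' m : Nat.factoredNumbers (Finset.range N), gEW f ↑m := (_root_.tsum_subtype _ _).symm
    _ = ∏ p ∈ (Finset.range N).filter Nat.Prime, ∑' e : ℕ, gEW f (p ^ e) := hP.tsum_eq
    _ = ∏ p ∈ (Finset.range N).filter Nat.Prime, (1 / (1 - wp f p)) :=
        Finset.prod_congr rfl fun q hq => gEW_pow_tsum f (Finset.mem_filter.mp hq).2
    _ ≤ Real.exp (2 * ∑' n : ℕ, bnd f n) := prod_bound f hfin _

lemma hasProd_inv_aux {ι : Type*} {u : ι → ℝ} {a : ℝ} (h : HasProd u a) (ha : a ≠ 0) :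
    HasProd (fun i => (u i)⁻¹) a⁻¹ := by
  have t : Tendsto (fun s : Finset ι => (∏ i ∈ s, u i)⁻¹) atTop (𝓝 a⁻¹) := Tendsto.inv₀ h ha
  exact t.congr fun s => (Finset.prod_inv_distrib u).symm

lemma gEW_hasProd
    (hfin : Summable (fun p : Nat.Primes => if f (p : ℕ) ≠ 0 then (1:ℝ) / ((p:ℕ):ℝ) else 0)) :
    HasProd (fun p : Nat.Primes => 1 / (1 - wp f (p : ℕ))) (∑' n : ℕ, gEW f n) := by
  have hnorm : Summable (fun n : ℕ => ‖gEW f n‖) :=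
    (gEW_summable f hfin).congr fun n => (Real.norm_of_nonneg (gEW_nonneg f n)).symm
  have HP := EulerProduct.eulerProduct_hasProd (gEW_one f)
    (fun {a b} hab => gEW_mul f hab) hnorm (gEW_zero f)
  have heq : (fun p : Nat.Primes => ∑' e : ℕ, gEW f ((p : ℕ) ^ e)) =
      (fun p : Nat.Primes => 1 / (1 - wp f (p : ℕ))) :=
    funext fun p => gEW_pow_tsum f p.2
  rwa [heq] at HP

lemma gEW_tsum_pos
    (hfin : Summable (fun p : Nat.Primes => if f (p : ℕ) ≠ 0 then (1:ℝ) / ((p:ℕ):ℝ) else 0)) :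
    1 ≤ ∑' n : ℕ, gEW f n := by
  have := Summable.le_tsum (gEW_summable f hfin) 1 (fun j _ => gEW_nonneg f j)
  rwa [gEW_one] at this

lemma one_sub_wp_hasProd
    (hfin : Summable (fun p : Nat.Primes => if f (p : ℕ) ≠ 0 then (1:ℝ) / ((p:ℕ):ℝ) else 0)) :
    HasProd (fun p : Nat.Primes => 1 - wp f (p : ℕ)) (∑' n : ℕ, gEW f n)⁻¹ := by
  have hB : (∑' n : ℕ, gEW f n) ≠ 0 := by
    have := gEW_tsum_pos f hfin; linarith
  have h2 := hasProd_inv_aux (gEW_hasProd f hfin) hB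
  have heq : (fun p : Nat.Primes => (1 / (1 - wp f (p : ℕ)))⁻¹) =
      (fun p : Nat.Primes => 1 - wp f (p : ℕ)) := by
    funext p
    rw [one_div, inv_inv]
  rwa [heq] at h2

lemma t_nonneg (y : ℝ) (m : ℕ) : 0 ≤ (if 1 ≤ m ∧ f m ≤ y then hf f m / m else 0) := by
  split
  · exact div_nonneg (hf_nonneg f m) (Nat.cast_nonneg m)
  · exact le_refl 0

lemma t_le_g (y : ℝ) (m : ℕ) : (if 1 ≤ m ∧ f m ≤ y then hf f m / m else 0) ≤ gEW f m := by
  unfold gEW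
  split_ifs with h1 h2
  · exact le_refl _
  · exact absurd h1.1 h2
  · exact div_nonneg (hf_nonneg f m) (Nat.cast_nonneg m)
  · exact le_refl 0

lemma t_summable
    (hfin : Summable (fun p : Nat.Primes => if f (p : ℕ) ≠ 0 then (1:ℝ) / ((p:ℕ):ℝ) else 0))
    (y : ℝ) :
    Summable (fun m : ℕ => if 1 ≤ m ∧ f m ≤ y then hf f m / m else 0) :=
  Summable.of_nonneg_of_le (t_nonneg f y) (t_le_g f y) (gEW_summable f hfin)

lemma tprod_one_sub_wp
    (hfin : Summable (fun p : Nat.Primes => if f (p : ℕ) ≠ 0 then (1:ℝ) / ((p:ℕ):ℝ) else 0)) :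
    (∏' p : Nat.Primes, (1 - wp f (p : ℕ))) = (∑' n : ℕ, gEW f n)⁻¹ :=
  (one_sub_wp_hasProd f hfin).tprod_eq

lemma Flim_monotone
    (hfin : Summable (fun p : Nat.Primes => if f (p : ℕ) ≠ 0 then (1:ℝ) / ((p:ℕ):ℝ) else 0)) :
    Monotone (Flim f) := by
  intro y z hyz
  unfold Flim
  have hA : (0:ℝ) ≤ ∏' p : Nat.Primes, (1 - wp f (p : ℕ)) := by
    rw [tprod_one_sub_wp f hfin]
    have := gEW_tsum_pos f hfin
    positivity
  refine mul_le_mul_of_nonneg_left ?_ hA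
  refine Summable.tsum_le_tsum (fun m => ?_) (t_summable f hfin y) (t_summable f hfin z)
  split_ifs with h1 h2
  · exact le_refl _
  · exact absurd ⟨h1.1, h1.2.trans hyz⟩ h2
  · exact div_nonneg (hf_nonneg f m) (Nat.cast_nonneg m)
  · exact le_refl 0

lemma Flim_tendsto_atBot
    (hfin : Summable (fun p : Nat.Primes => if f (p : ℕ) ≠ 0 then (1:ℝ) / ((p:ℕ):ℝ) else 0)) :
    Tendsto (Flim f) atBot (𝓝 0) := by
  have hT : Tendsto (fun y : ℝ => ∑' m : ℕ, if 1 ≤ m ∧ f m ≤ y then hf f m / m else 0)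
      atBot (𝓝 (∑' _ : ℕ, (0:ℝ))) := by
    refine tendsto_tsum_of_dominated_convergence (gEW_summable f hfin) (fun m => ?_) ?_
    · have hev : ∀ᶠ y : ℝ in atBot,
          (if 1 ≤ m ∧ f m ≤ y then hf f m / m else 0) = 0 := by
        filter_upwards [eventually_le_atBot (f m - 1)] with y hy
        rw [if_neg]
        rintro ⟨-, h2⟩
        linarith
      exact tendsto_const_nhds.congr' (hev.mono fun y h => h.symm)
    · refine Eventually.of_forall fun y m => ?_
      rw [Real.norm_of_nonneg (t_nonneg f y m)]
      exact t_le_g f y m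
  rw [tsum_zero] at hT
  have := hT.const_mul (∏' p : Nat.Primes, (1 - wp f (p : ℕ)))
  rw [mul_zero] at this
  exact this

lemma Flim_tendsto_atTop
    (hfin : Summable (fun p : Nat.Primes => if f (p : ℕ) ≠ 0 then (1:ℝ) / ((p:ℕ):ℝ) else 0)) :
    Tendsto (Flim f) atTop (𝓝 1) := by
  have hT : Tendsto (fun y : ℝ => ∑' m : ℕ, if 1 ≤ m ∧ f m ≤ y then hf f m / m else 0)
      atTop (𝓝 (∑' n : ℕ, gEW f n)) := by
    refine tendsto_tsum_of_dominated_convergence (gEW_summable f hfin) (fun m => ?_) ?_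
    · have hev : ∀ᶠ y : ℝ in atTop,
          (if 1 ≤ m ∧ f m ≤ y then hf f m / m else 0) = gEW f m := by
        filter_upwards [eventually_ge_atTop (f m)] with y hy
        unfold gEW
        by_cases h1 : 1 ≤ m
        · rw [if_pos ⟨h1, hy⟩, if_pos h1]
        · rw [if_neg (fun hc => h1 hc.1), if_neg h1]
      exact tendsto_const_nhds.congr' (hev.mono fun y h => h.symm)
    · refine Eventually.of_forall fun y m => ?_
      rw [Real.norm_of_nonneg (t_nonneg f y m)]
      exact t_le_g f y m
  have hB : (∑' n : ℕ, gEW f n) ≠ 0 := by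
    have := gEW_tsum_pos f hfin; linarith
  have h2 := hT.const_mul (∏' p : Nat.Primes, (1 - wp f (p : ℕ)))
  have h3 : (∏' p : Nat.Primes, (1 - wp f (p : ℕ))) * (∑' n : ℕ, gEW f n) = 1 := by
    rw [tprod_one_sub_wp f hfin, inv_mul_cancel₀ hB]
  rw [h3] at h2
  exact h2

end Aux

/-- If `Σ_{f(p)≠0} 1/p < ∞` then `Σ_{m≥1} h_f(m)/m = ∏_p 1/(1 − w_p)`, both sides
being finite, and consequently `F` is a distribution function. -/
theorem hf_sum_eq_prod_and_F_distribution (f : ℕ → ℝ)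
    (hadd : IsAdditive f)
    (hfin : Summable (fun p : Nat.Primes => if f (p : ℕ) ≠ 0 then (1 : ℝ) / ((p : ℕ) : ℝ) else 0)) :
    Summable (fun m : ℕ => if 1 ≤ m then hf f m / m else 0) ∧
    Multipliable (fun p : Nat.Primes => 1 / (1 - wp f (p : ℕ))) ∧
    (∑' m : ℕ, if 1 ≤ m then hf f m / m else 0) =
      (∏' p : Nat.Primes, 1 / (1 - wp f (p : ℕ))) ∧
    Monotone (Flim f) ∧
    Tendsto (Flim f) atBot (𝓝 0) ∧
    Tendsto (Flim f) atTop (𝓝 1) := by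
  exact ⟨gEW_summable f hfin, (gEW_hasProd f hfin).multipliable,
    ((gEW_hasProd f hfin).tprod_eq).symm, Flim_monotone f hfin,
    Flim_tendsto_atBot f hfin, Flim_tendsto_atTop f hfin⟩

end
end

section
/- Let f be a real additive function such that Σ_{p : f(p)≠0} 1/p < ∞. Then, for x ≥ 2 and all sufficiently large T ≥ 2, one has Σ_{m > √x} u_f(m)/m ≪ x^{−2/log T}·log T + α_f(T) + 1/T, where the implied constant may depend on f; in particular, choosing T := x^{1/log₂x}, the left-hand side is ≪ α_f(x^{1/log₂x}) + 1/(log x)^{1/6} + 1/x^{c} for some absolute c > 0 when x is large. -/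
open Filter Topology Finset MeasureTheory
open scoped Classical

noncomputable section

namespace UfTailAux

variable (f : ℕ → ℝ)

lemma uf_nonneg (m : ℕ) : 0 ≤ uf f m := by unfold uf; split_ifs <;> norm_num

lemma uf_le_one (m : ℕ) : uf f m ≤ 1 := by unfold uf; split_ifs <;> norm_num

lemma uf_one : uf f 1 = 1 := by simp [uf]

lemma uf_prime {p : ℕ} (hp : p.Prime) : uf f p = if f p ≠ 0 then 1 else 0 := by
  unfold uf
  rw [hp.primeFactors]
  simp [hp.factorization_self]

lemma uf_mul {m n : ℕ} (h : Nat.Coprime m n) : uf f (m * n) = uf f m * uf f n := by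
  rcases eq_or_ne m 0 with rfl | hm
  · have hn : n = 1 := by simpa using h
    subst hn; simp [uf]
  rcases eq_or_ne n 0 with rfl | hn
  · have hm1 : m = 1 := by simpa using h
    subst hm1; simp [uf]
  have hpf : (m * n).primeFactors = m.primeFactors ∪ n.primeFactors :=
    Nat.primeFactors_mul hm hn
  have hfm : ∀ p ∈ m.primeFactors, (m * n).factorization p = m.factorization p := by
    intro p hp
    have hpp : p.Prime := Nat.prime_of_mem_primeFactors hp
    have hpd : p ∣ m := Nat.dvd_of_mem_primeFactors hp
    have hnd : ¬ p ∣ n := fun hd => hpp.ne_one (Nat.eq_one_of_dvd_one (h ▸ Nat.dvd_gcd hpd hd))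
    rw [Nat.factorization_mul hm hn]
    simp [Nat.factorization_eq_zero_of_not_dvd hnd]
  have hfn : ∀ p ∈ n.primeFactors, (m * n).factorization p = n.factorization p := by
    intro p hp
    have hpp : p.Prime := Nat.prime_of_mem_primeFactors hp
    have hpd : p ∣ n := Nat.dvd_of_mem_primeFactors hp
    have hmd : ¬ p ∣ m := fun hd => hpp.ne_one (Nat.eq_one_of_dvd_one (h ▸ Nat.dvd_gcd hd hpd))
    rw [Nat.factorization_mul hm hn]
    simp [Nat.factorization_eq_zero_of_not_dvd hmd]
  have key : (∀ p ∈ (m * n).primeFactors, f (p ^ ((m * n).factorization p)) ≠ 0) ↔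
      ((∀ p ∈ m.primeFactors, f (p ^ m.factorization p) ≠ 0) ∧
        (∀ p ∈ n.primeFactors, f (p ^ n.factorization p) ≠ 0)) := by
    rw [hpf]
    rw [Finset.forall_mem_union]
    constructor
    · rintro ⟨h1, h2⟩
      exact ⟨fun p hp => by rw [← hfm p hp]; exact h1 p hp,
             fun p hp => by rw [← hfn p hp]; exact h2 p hp⟩
    · rintro ⟨h1, h2⟩
      exact ⟨fun p hp => by rw [hfm p hp]; exact h1 p hp,
             fun p hp => by rw [hfn p hp]; exact h2 p hp⟩
  unfold uf
  rw [if_congr key rfl rfl]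
  by_cases h1 : (∀ p ∈ m.primeFactors, f (p ^ m.factorization p) ≠ 0) <;>
    by_cases h2 : (∀ p ∈ n.primeFactors, f (p ^ n.factorization p) ≠ 0)
  · rw [if_pos ⟨h1, h2⟩, if_pos h1, if_pos h2]; norm_num
  · rw [if_neg (fun hc => h2 hc.2), if_pos h1, if_neg h2]; norm_num
  · rw [if_neg (fun hc => h1 hc.1), if_neg h1, if_pos h2]; norm_num
  · rw [if_neg (fun hc => h1 hc.1), if_neg h1, if_neg h2]; norm_num

/-- The function `m ↦ u_f(m)/m`. -/
def gf (f : ℕ → ℝ) (m : ℕ) : ℝ := uf f m / m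

lemma gf_nonneg (m : ℕ) : 0 ≤ gf f m := div_nonneg (uf_nonneg f m) (Nat.cast_nonneg m)

lemma gf_one : gf f 1 = 1 := by simp [gf, uf_one]

lemma gf_zero : gf f 0 = 0 := by simp [gf]

lemma gf_mul {m n : ℕ} (h : Nat.Coprime m n) : gf f (m * n) = gf f m * gf f n := by
  unfold gf
  rw [uf_mul f h, Nat.cast_mul, mul_div_mul_comm]

lemma gf_le (m : ℕ) : gf f m ≤ 1 / m := by
  rcases Nat.eq_zero_or_pos m with rfl | hm
  · simp [gf]
  · unfold gf
    gcongr
    exact uf_le_one f m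

lemma gf_pow_le {p : ℕ} (hp : 0 < p) (k : ℕ) : gf f (p ^ k) ≤ (1 / (p : ℝ)) ^ k := by
  calc gf f (p ^ k) ≤ 1 / ((p ^ k : ℕ) : ℝ) := gf_le f _
  _ = (1 / (p : ℝ)) ^ k := by push_cast; rw [div_pow, one_pow]


lemma tsum_primes_eq (h : ℕ → ℝ) :
    (∑' p : Nat.Primes, h (p : ℕ)) = ∑' n : ℕ, if n.Prime then h n else 0 := by
  have := tsum_subtype {n : ℕ | n.Prime} h
  rw [show (∑' p : Nat.Primes, h (p : ℕ)) = ∑' (x : {n : ℕ | n.Prime}), h x from rfl, this]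
  refine tsum_congr fun n => ?_
  by_cases hn : n.Prime <;> simp [Set.indicator_apply, hn, Set.mem_setOf_eq]

lemma summable_primes_iff (h : ℕ → ℝ) :
    Summable (fun p : Nat.Primes => h (p : ℕ)) ↔
      Summable (fun n : ℕ => if n.Prime then h n else 0) := by
  rw [show Summable (fun p : Nat.Primes => h (p : ℕ)) ↔
      Summable (h ∘ (Subtype.val : {n : ℕ | n.Prime} → ℕ)) from Iff.rfl,
    summable_subtype_iff_indicator]
  constructor <;> intro H <;> apply H.congr <;> intro n <;>
    by_cases hn : n.Prime <;> simp [Set.indicator_apply, hn, Set.mem_setOf_eq]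

/-- finite geometric-tail bound: sum of `r^k` over a set of `k ≥ 2` is at most `4 r²`. -/
lemma sum_geom_from_two {r : ℝ} (h0 : 0 ≤ r) (hr : r ≤ 3/4) (s : Finset ℕ)
    (hs : ∀ k ∈ s, 2 ≤ k) : ∑ k ∈ s, r ^ k ≤ 4 * r ^ 2 := by
  have hr1 : r < 1 := lt_of_le_of_lt hr (by norm_num)
  have hgs : Summable (fun k : ℕ => r ^ k) := summable_geometric_of_lt_one h0 hr1
  have hsum : Summable (fun k : ℕ => if 2 ≤ k then r ^ k else 0) := by
    apply Summable.of_nonneg_of_le (fun k => by positivity) (fun k => ?_) hgs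
    split_ifs <;> [exact le_rfl; positivity]
  have h1 : ∑ k ∈ s, r ^ k = ∑ k ∈ s, (if 2 ≤ k then r ^ k else 0) :=
    Finset.sum_congr rfl fun k hk => by rw [if_pos (hs k hk)]
  rw [h1]
  have h2 : ∑ k ∈ s, (if 2 ≤ k then r ^ k else 0) ≤
      ∑' k : ℕ, (if 2 ≤ k then r ^ k else 0) :=
    Summable.sum_le_tsum s (fun k _ => by positivity) hsum
  have h3 : (∑' k : ℕ, (if 2 ≤ k then r ^ k else 0)) = ∑' k : ℕ, r ^ (k + 2) := by
    rw [Summable.tsum_eq_zero_add hsum, Summable.tsum_eq_zero_add ((summable_nat_add_iff 1).2 hsum)]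
    have e0 : (if 2 ≤ (0:ℕ) then r ^ (0:ℕ) else 0) = 0 := by norm_num
    have e1 : (if 2 ≤ (0:ℕ)+1 then r ^ ((0:ℕ)+1) else 0) = 0 := by norm_num
    rw [e0, e1, zero_add, zero_add]
    exact tsum_congr fun k => by rw [if_pos (by omega : 2 ≤ k + 1 + 1)]
  have h4 : (∑' k : ℕ, r ^ (k + 2)) = r ^ 2 * (1 - r)⁻¹ := by
    rw [← tsum_geometric_of_lt_one h0 hr1, ← tsum_mul_left]
    exact tsum_congr fun k => by ring
  have h5 : (1 - r)⁻¹ ≤ 4 := by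
    rw [inv_le_comm₀ (by linarith) (by norm_num)]
    linarith
  calc ∑ k ∈ s, (if 2 ≤ k then r ^ k else 0) ≤ r ^ 2 * (1 - r)⁻¹ := by rw [← h4, ← h3]; exact h2
  _ ≤ r ^ 2 * 4 := by apply mul_le_mul_of_nonneg_left h5 (by positivity)
  _ = 4 * r ^ 2 := by ring

/-- tsum tail: if `0 ≤ h k ≤ r^k` then `∑' k, h (k+2) ≤ 4 r²`. -/
lemma tsum_tail_le {h : ℕ → ℝ} {r : ℝ} (h0 : 0 ≤ r) (hr : r ≤ 3/4)
    (hh0 : ∀ k, 0 ≤ h k) (hle : ∀ k, h k ≤ r ^ k) : ∑' k : ℕ, h (k + 2) ≤ 4 * r ^ 2 := by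
  have hr1 : r < 1 := lt_of_le_of_lt hr (by norm_num)
  have hgs : Summable (fun k : ℕ => r ^ k) := summable_geometric_of_lt_one h0 hr1
  have hsumh : Summable h := Summable.of_nonneg_of_le hh0 hle hgs
  have h2 : (∑' k : ℕ, h (k + 2)) ≤ ∑' k : ℕ, r ^ (k + 2) := by
    apply Summable.tsum_le_tsum (fun k => hle (k + 2)) ((summable_nat_add_iff 2).2 hsumh)
      ((summable_nat_add_iff 2).2 hgs)
  have h4 : (∑' k : ℕ, r ^ (k + 2)) = r ^ 2 * (1 - r)⁻¹ := by
    rw [← tsum_geometric_of_lt_one h0 hr1, ← tsum_mul_left]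
    exact tsum_congr fun k => by ring
  have h5 : (1 - r)⁻¹ ≤ 4 := by
    rw [inv_le_comm₀ (by linarith) (by norm_num)]
    linarith
  calc (∑' k : ℕ, h (k + 2)) ≤ r ^ 2 * (1 - r)⁻¹ := by rw [← h4]; exact h2
  _ ≤ r ^ 2 * 4 := by apply mul_le_mul_of_nonneg_left h5 (by positivity)
  _ = 4 * r ^ 2 := by ring

/-- telescoping bound `∑_{n ∈ Icc a M} 1/n² ≤ 1/(a-1)`. -/
lemma sum_inv_sq_le (a M : ℕ) (ha : 2 ≤ a) :
    ∑ n ∈ Finset.Icc a M, (1 / (n : ℝ) ^ 2) ≤ 1 / ((a : ℝ) - 1) := by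
  have ha1 : (1:ℝ) ≤ (a : ℝ) - 1 := by
    have : (2:ℝ) ≤ (a:ℝ) := by exact_mod_cast ha
    linarith
  have main : ∀ M : ℕ, ∑ n ∈ Finset.Icc a M, (1 / (n : ℝ) ^ 2) ≤
      1 / ((a : ℝ) - 1) - 1 / ((max M (a-1) : ℕ) : ℝ) := by
    intro M
    induction M with
    | zero =>
      rw [Finset.Icc_eq_empty_of_lt (by omega : (0:ℕ) < a), Finset.sum_empty]
      have hmax : max 0 (a-1) = a - 1 := by omega
      rw [hmax]
      have : ((a - 1 : ℕ) : ℝ) = (a : ℝ) - 1 := by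
        push_cast [Nat.cast_sub (by omega : 1 ≤ a)]; ring
      rw [this]
      linarith
    | succ M ih =>
      rcases lt_or_ge (M + 1) a with hlt | hge
      · rw [Finset.Icc_eq_empty_of_lt hlt, Finset.sum_empty]
        have hmax : max (M+1) (a-1) = a - 1 := by omega
        rw [hmax]
        have : ((a - 1 : ℕ) : ℝ) = (a : ℝ) - 1 := by
          push_cast [Nat.cast_sub (by omega : 1 ≤ a)]; ring
        rw [this]
        linarith
      · rw [Finset.sum_Icc_succ_top hge]
        have hMa : a - 1 ≤ M := by omega
        have hmax1 : max M (a-1) = M := by omega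
        have hmax2 : max (M+1) (a-1) = M + 1 := by omega
        rw [hmax1] at ih
        rw [hmax2]
        have hM1 : (1:ℝ) ≤ (M : ℝ) := by
          have : 1 ≤ M := by omega
          exact_mod_cast this
        have hcast : ((M + 1 : ℕ) : ℝ) = (M : ℝ) + 1 := by push_cast; ring
        rw [hcast]
        have key : 1 / ((M:ℝ)+1)^2 ≤ 1 / (M:ℝ) - 1 / ((M:ℝ)+1) := by
          rw [div_sub_div _ _ (by linarith) (by linarith),
            div_le_div_iff₀ (by positivity) (by positivity)]
          ring_nf
          nlinarith
        linarith
  calc ∑ n ∈ Finset.Icc a M, (1 / (n : ℝ) ^ 2) ≤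
      1 / ((a : ℝ) - 1) - 1 / ((max M (a-1) : ℕ) : ℝ) := main M
  _ ≤ 1 / ((a : ℝ) - 1) := by
      have : (0:ℝ) ≤ 1 / ((max M (a-1) : ℕ) : ℝ) := by positivity
      linarith

section WithSummable

variable {f : ℕ → ℝ}
  (hS : Summable (fun p : Nat.Primes => if f (p : ℕ) ≠ 0 then (1 : ℝ) / ((p : ℕ) : ℝ) else 0))

/-- `A f = Σ_p u_f(p)/p` (as a sum over all naturals with prime indicator). -/
def Af (f : ℕ → ℝ) : ℝ := ∑' n : ℕ, if n.Prime then gf f n else 0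

lemma gf_prime_eq {p : ℕ} (hp : p.Prime) :
    gf f p = if f p ≠ 0 then (1:ℝ) / (p : ℝ) else 0 := by
  unfold gf
  rw [uf_prime f hp]
  split_ifs <;> simp

include hS in
lemma summable_A : Summable (fun n : ℕ => if n.Prime then gf f n else 0) := by
  have := (summable_primes_iff (fun n => if f n ≠ 0 then (1:ℝ) / (n : ℝ) else 0)).mp hS
  apply this.congr
  intro n
  by_cases hn : n.Prime
  · rw [if_pos hn, if_pos hn, gf_prime_eq hn]
  · rw [if_neg hn, if_neg hn]

lemma Af_nonneg : 0 ≤ Af f :=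
  tsum_nonneg fun n => by split_ifs <;> [exact gf_nonneg f n; exact le_rfl]

include hS in
lemma sum_primes_gf_le {s : Finset ℕ} (hs : ∀ p ∈ s, p.Prime) :
    ∑ p ∈ s, gf f p ≤ Af f := by
  have h1 : ∑ p ∈ s, gf f p = ∑ p ∈ s, (if p.Prime then gf f p else 0) :=
    Finset.sum_congr rfl fun p hp => by rw [if_pos (hs p hp)]
  rw [h1]
  exact Summable.sum_le_tsum s (fun p _ => by split_ifs <;> [exact gf_nonneg f p; exact le_rfl])
    (summable_A hS)

lemma alphaf_eq (y : ℝ) :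
    alphaf f y = ∑' n : ℕ, if n.Prime then (if y < (n:ℝ) then gf f n else 0) else 0 := by
  unfold alphaf
  exact tsum_primes_eq (fun n => if y < (n:ℝ) then gf f n else 0)

include hS in
lemma summable_alphaf (y : ℝ) :
    Summable (fun n : ℕ => if n.Prime then (if y < (n:ℝ) then gf f n else 0) else 0) := by
  apply Summable.of_nonneg_of_le _ _ (summable_A hS)
  · intro n; split_ifs <;> [exact gf_nonneg f n; exact le_rfl; exact le_rfl]
  · intro n; split_ifs <;> [exact le_rfl; exact gf_nonneg f n; exact le_rfl]

include hS in
lemma alphaf_nonneg (y : ℝ) : 0 ≤ alphaf f y := by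
  rw [alphaf_eq]
  exact tsum_nonneg fun n => by
    split_ifs <;> [exact gf_nonneg f n; exact le_rfl; exact le_rfl]

include hS in
lemma sum_primes_gf_le_alphaf {T : ℝ} {s : Finset ℕ}
    (hs : ∀ p ∈ s, p.Prime ∧ T < (p : ℝ)) :
    ∑ p ∈ s, gf f p ≤ alphaf f T := by
  rw [alphaf_eq]
  have h1 : ∑ p ∈ s, gf f p =
      ∑ p ∈ s, (if p.Prime then (if T < (p:ℝ) then gf f p else 0) else 0) :=
    Finset.sum_congr rfl fun p hp => by rw [if_pos (hs p hp).1, if_pos (hs p hp).2]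
  rw [h1]
  exact Summable.sum_le_tsum s
    (fun p _ => by split_ifs <;> [exact gf_nonneg f p; exact le_rfl; exact le_rfl])
    (summable_alphaf hS T)

lemma summable_gf_pow {p : ℕ} (hp : p.Prime) :
    Summable (fun k : ℕ => ‖gf f (p ^ k)‖) := by
  have h2 : (2:ℝ) ≤ (p:ℝ) := by exact_mod_cast hp.two_le
  apply Summable.of_nonneg_of_le (fun k => norm_nonneg _) (fun k => ?_)
    (summable_geometric_of_lt_one (r := 1/(p:ℝ)) (by positivity) (by
      rw [div_lt_one (by linarith)]; linarith))
  rw [Real.norm_of_nonneg (gf_nonneg f _)]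
  exact gf_pow_le f hp.pos k

include hS in
lemma tsum_gf_pow_le {p : ℕ} (hp : p.Prime) :
    (∑' k : ℕ, gf f (p ^ k)) ≤ 1 + gf f p + 4 * (1 / (p:ℝ)) ^ 2 := by
  have h2 : (2:ℝ) ≤ (p:ℝ) := by exact_mod_cast hp.two_le
  have hsum : Summable (fun k : ℕ => gf f (p ^ k)) :=
    (summable_gf_pow hp).congr fun k => Real.norm_of_nonneg (gf_nonneg f _)
  rw [Summable.tsum_eq_zero_add hsum, Summable.tsum_eq_zero_add ((summable_nat_add_iff 1).2 hsum)]
  have e0 : gf f (p ^ (0:ℕ)) = 1 := by rw [pow_zero]; exact gf_one f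
  have tail : (∑' k : ℕ, gf f (p ^ (k + 1 + 1))) ≤ 4 * (1 / (p:ℝ)) ^ 2 := by
    have := tsum_tail_le (h := fun k => gf f (p ^ k)) (r := 1/(p:ℝ)) (by positivity)
      (by rw [div_le_div_iff₀ (by linarith) (by norm_num)]; linarith)
      (fun k => gf_nonneg f _) (fun k => gf_pow_le f hp.pos k)
    exact this
  rw [e0, pow_one]
  linarith
end WithSummable

section Euler

variable {f : ℕ → ℝ}
  (hS : Summable (fun p : Nat.Primes => if f (p : ℕ) ≠ 0 then (1 : ℝ) / ((p : ℕ) : ℝ) else 0))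

include hS in
lemma tsum_smooth_gf (N : ℕ) :
    Summable (fun m : ↥(N.smoothNumbers) => gf f (m : ℕ)) ∧
      (∑' m : ↥(N.smoothNumbers), gf f (m : ℕ)) ≤ Real.exp (Af f + 4) := by
  obtain ⟨h1, h2⟩ := EulerProduct.summable_and_hasSum_smoothNumbers_prod_primesBelow_tsum
    (f := gf f) (gf_one f) (fun {m n} h => gf_mul f h) (fun {p} hp => summable_gf_pow hp) N
  have hsummable : Summable (fun m : ↥(N.smoothNumbers) => gf f (m : ℕ)) :=
    h1.congr fun m => Real.norm_of_nonneg (gf_nonneg f _)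
  refine ⟨hsummable, ?_⟩
  rw [h2.tsum_eq]
  have hfac : ∀ p ∈ N.primesBelow, (∑' k : ℕ, gf f (p ^ k)) ≤
      Real.exp (gf f p + 4 * (1 / (p:ℝ)) ^ 2) := by
    intro p hp
    have hpp : p.Prime := Nat.prime_of_mem_primesBelow hp
    calc (∑' k : ℕ, gf f (p ^ k)) ≤ 1 + gf f p + 4 * (1 / (p:ℝ)) ^ 2 :=
        tsum_gf_pow_le hS hpp
    _ = (gf f p + 4 * (1 / (p:ℝ)) ^ 2) + 1 := by ring
    _ ≤ Real.exp (gf f p + 4 * (1 / (p:ℝ)) ^ 2) := Real.add_one_le_exp _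
  calc (∏ p ∈ N.primesBelow, ∑' k : ℕ, gf f (p ^ k)) ≤
      ∏ p ∈ N.primesBelow, Real.exp (gf f p + 4 * (1 / (p:ℝ)) ^ 2) := by
        apply Finset.prod_le_prod (fun p _ => tsum_nonneg fun k => gf_nonneg f _) hfac
  _ = Real.exp (∑ p ∈ N.primesBelow, (gf f p + 4 * (1 / (p:ℝ)) ^ 2)) :=
        (Real.exp_sum _ _).symm
  _ ≤ Real.exp (Af f + 4) := by
        apply Real.exp_le_exp.mpr
        rw [Finset.sum_add_distrib]
        have hA : ∑ p ∈ N.primesBelow, gf f p ≤ Af f :=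
          sum_primes_gf_le hS fun p hp => Nat.prime_of_mem_primesBelow hp
        have hB : ∑ p ∈ N.primesBelow, 4 * (1 / (p:ℝ)) ^ 2 ≤ 4 := by
          have hsub : N.primesBelow ⊆ Finset.Icc 2 N := by
            intro p hp
            have hpp : p.Prime := Nat.prime_of_mem_primesBelow hp
            have : p < N := Nat.lt_of_mem_primesBelow hp
            exact Finset.mem_Icc.mpr ⟨hpp.two_le, by omega⟩
          calc ∑ p ∈ N.primesBelow, 4 * (1 / (p:ℝ)) ^ 2
              ≤ ∑ p ∈ Finset.Icc 2 N, 4 * (1 / (p:ℝ)) ^ 2 :=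
                Finset.sum_le_sum_of_subset_of_nonneg hsub (fun p _ _ => by positivity)
          _ = 4 * ∑ p ∈ Finset.Icc 2 N, (1 / (p:ℝ) ^ 2) := by
                rw [Finset.mul_sum]; exact Finset.sum_congr rfl fun p _ => by rw [div_pow, one_pow]
          _ ≤ 4 * (1 / ((2:ℝ) - 1)) := by
                have := sum_inv_sq_le 2 N le_rfl
                norm_num at this ⊢
                exact this
          _ = 4 := by norm_num
        linarith

include hS in
lemma sum_gf_finset_le (s : Finset ℕ) : ∑ m ∈ s, gf f m ≤ Real.exp (Af f + 4) := by
  set N := s.sup id + 1 with hN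
  have hmem : ∀ m ∈ s, gf f m ≤ (N.smoothNumbers : Set ℕ).indicator (gf f) m := by
    intro m hm
    rcases Nat.eq_zero_or_pos m with rfl | hm0
    · rw [gf_zero]
      exact Set.indicator_apply_nonneg fun _ => gf_nonneg f 0
    · have : m ∈ N.smoothNumbers := by
        rw [Nat.mem_smoothNumbers]
        refine ⟨by omega, fun p hp => ?_⟩
        have hpd : p ∣ m := Nat.dvd_of_mem_primeFactorsList hp
        have : p ≤ m := Nat.le_of_dvd hm0 hpd
        have hms : m ≤ s.sup id := Finset.le_sup (f := id) hm
        omega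
      rw [Set.indicator_of_mem this]
  have hsummable : Summable ((N.smoothNumbers : Set ℕ).indicator (gf f)) := by
    rw [← summable_subtype_iff_indicator]
    exact (tsum_smooth_gf hS N).1
  calc ∑ m ∈ s, gf f m ≤ ∑ m ∈ s, (N.smoothNumbers : Set ℕ).indicator (gf f) m :=
        Finset.sum_le_sum hmem
  _ ≤ ∑' m : ℕ, (N.smoothNumbers : Set ℕ).indicator (gf f) m :=
        Summable.sum_le_tsum s (fun m _ => Set.indicator_apply_nonneg fun _ => gf_nonneg f m) hsummable
  _ = ∑' m : ↥(N.smoothNumbers), gf f (m : ℕ) := (_root_.tsum_subtype _ _).symm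
  _ ≤ Real.exp (Af f + 4) := (tsum_smooth_gf hS N).2

include hS in
lemma summable_gf : Summable (gf f) :=
  summable_of_sum_range_le (fun n => gf_nonneg f n)
    (fun n => sum_gf_finset_le hS (Finset.range n))

end Euler

section Rankin

/-- Rankin-weighted multiplicative function `u_f(m) m^{δ-1}`. -/
def gd (f : ℕ → ℝ) (δ : ℝ) (m : ℕ) : ℝ := uf f m * (m : ℝ) ^ (δ - 1)

variable {f : ℕ → ℝ}
  (hS : Summable (fun p : Nat.Primes => if f (p : ℕ) ≠ 0 then (1 : ℝ) / ((p : ℕ) : ℝ) else 0))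

lemma gd_nonneg (δ : ℝ) (m : ℕ) : 0 ≤ gd f δ m :=
  mul_nonneg (uf_nonneg f m) (Real.rpow_nonneg (Nat.cast_nonneg m) _)

lemma gd_one (δ : ℝ) : gd f δ 1 = 1 := by simp [gd, uf_one]

lemma gd_mul (δ : ℝ) {m n : ℕ} (h : Nat.Coprime m n) :
    gd f δ (m * n) = gd f δ m * gd f δ n := by
  unfold gd
  rw [uf_mul f h, Nat.cast_mul,
    Real.mul_rpow (Nat.cast_nonneg m) (Nat.cast_nonneg n)]
  ring

lemma gd_pow_le (δ : ℝ) {p : ℕ} (hp : 0 < p) (k : ℕ) :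
    gd f δ (p ^ k) ≤ ((p : ℝ) ^ (δ - 1)) ^ k := by
  have hp0 : (0:ℝ) < (p:ℝ) := by exact_mod_cast hp
  have hcast : ((p ^ k : ℕ) : ℝ) = (p : ℝ) ^ (k : ℕ) := by push_cast; ring
  have hrw : ((p ^ k : ℕ) : ℝ) ^ (δ - 1) = ((p : ℝ) ^ (δ - 1)) ^ k := by
    rw [hcast, ← Real.rpow_natCast (p:ℝ) k, ← Real.rpow_mul hp0.le,
      ← Real.rpow_natCast ((p:ℝ) ^ (δ - 1)) k, ← Real.rpow_mul hp0.le]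
    ring_nf
  unfold gd
  rw [hrw]
  have h1 : (0:ℝ) ≤ ((p : ℝ) ^ (δ - 1)) ^ k := by positivity
  nlinarith [uf_le_one f (p ^ k), uf_nonneg f (p ^ k)]

section DeltaFacts

variable {T : ℝ}

lemma logT_pos (hT : Real.exp 8 ≤ T) : 8 ≤ Real.log T := by
  have h0 : (0:ℝ) < Real.exp 8 := Real.exp_pos 8
  calc (8:ℝ) = Real.log (Real.exp 8) := (Real.log_exp 8).symm
  _ ≤ Real.log T := Real.log_le_log h0 hT

lemma T_pos (hT : Real.exp 8 ≤ T) : 0 < T := lt_of_lt_of_le (Real.exp_pos 8) hT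

/-- the Rankin exponent facts: for prime `p ≤ T`, with `δ = 4/log T`,
`r := p^{δ-1}` satisfies `r ≤ 3/4` and `r ≤ e⁴/p`. -/
lemma rankin_r_facts (hT : Real.exp 8 ≤ T) {p : ℕ} (hp : p.Prime) (hpT : (p : ℝ) ≤ T) :
    (p:ℝ) ^ (4 / Real.log T - 1) ≤ 3/4 ∧
      (p:ℝ) ^ (4 / Real.log T - 1) ≤ Real.exp 4 / (p:ℝ) := by
  have hlog : 8 ≤ Real.log T := logT_pos hT
  have hp2 : (2:ℝ) ≤ (p:ℝ) := by exact_mod_cast hp.two_le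
  have hp0 : (0:ℝ) < (p:ℝ) := by linarith
  have hp1 : (1:ℝ) ≤ (p:ℝ) := by linarith
  set δ : ℝ := 4 / Real.log T with hδ
  have hδpos : 0 < δ := by positivity
  have hδhalf : δ ≤ 1/2 := by
    rw [hδ, div_le_div_iff₀ (by linarith) (by norm_num)]
    linarith
  have hr0 : (0:ℝ) ≤ (p:ℝ) ^ (δ - 1) := Real.rpow_nonneg hp0.le _
  constructor
  · -- r ≤ 3/4 via r² ≤ 1/2 ≤ (3/4)²
    have hsq : ((p:ℝ) ^ (δ - 1)) ^ (2:ℕ) ≤ 1/2 := by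
      have e1 : ((p:ℝ) ^ (δ - 1)) ^ (2:ℕ) = (p:ℝ) ^ ((δ - 1) * 2) := by
        rw [← Real.rpow_natCast ((p:ℝ) ^ (δ - 1)) 2, ← Real.rpow_mul hp0.le]
        norm_num
      rw [e1]
      have e2 : (p:ℝ) ^ ((δ - 1) * 2) ≤ (p:ℝ) ^ (-1:ℝ) :=
        Real.rpow_le_rpow_of_exponent_le hp1 (by linarith)
      have e3 : (p:ℝ) ^ (-1:ℝ) = 1 / (p:ℝ) := by
        rw [Real.rpow_neg_one]; exact (one_div _).symm
      rw [e3] at e2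
      calc (p:ℝ) ^ ((δ - 1) * 2) ≤ 1 / (p:ℝ) := e2
      _ ≤ 1/2 := by rw [div_le_div_iff₀ hp0 (by norm_num)]; linarith
    nlinarith [hr0]
  · -- r ≤ e⁴/p
    have e1 : (p:ℝ) ^ (δ - 1) = (p:ℝ) ^ δ / (p:ℝ) := by
      rw [Real.rpow_sub hp0, Real.rpow_one]
    rw [e1]
    have hplog : Real.log (p:ℝ) ≤ Real.log T := Real.log_le_log hp0 hpT
    have hlogp0 : 0 ≤ Real.log (p:ℝ) := Real.log_nonneg hp1
    have e2 : (p:ℝ) ^ δ ≤ Real.exp 4 := by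
      rw [Real.rpow_def_of_pos hp0]
      apply Real.exp_le_exp.mpr
      rw [hδ, ← mul_div_assoc, div_le_iff₀ (by linarith : (0:ℝ) < Real.log T)]
      nlinarith
    gcongr
end DeltaFacts

end Rankin

section Euler2

variable {f : ℕ → ℝ}
  (hS : Summable (fun p : Nat.Primes => if f (p : ℕ) ≠ 0 then (1 : ℝ) / ((p : ℕ) : ℝ) else 0))

lemma summable_gd_pow {δ : ℝ} (hδ : δ < 1) {p : ℕ} (hp : p.Prime) :
    Summable (fun k : ℕ => ‖gd f δ (p ^ k)‖) := by
  have hp1 : (1:ℝ) < (p:ℝ) := by exact_mod_cast hp.one_lt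
  have hr0 : (0:ℝ) ≤ (p:ℝ) ^ (δ - 1) := Real.rpow_nonneg (by linarith) _
  have hr1 : (p:ℝ) ^ (δ - 1) < 1 :=
    Real.rpow_lt_one_of_one_lt_of_neg hp1 (by linarith)
  apply Summable.of_nonneg_of_le (fun k => norm_nonneg _) (fun k => ?_)
    (summable_geometric_of_lt_one hr0 hr1)
  rw [Real.norm_of_nonneg (gd_nonneg _ _)]
  exact gd_pow_le δ hp.pos k

include hS in
lemma tsum_smooth_gd {T : ℝ} (hT : Real.exp 8 ≤ T) :
    Summable (fun m : ↥((⌊T⌋₊ + 1).smoothNumbers) => gd f (4 / Real.log T) (m : ℕ)) ∧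
      (∑' m : ↥((⌊T⌋₊ + 1).smoothNumbers), gd f (4 / Real.log T) (m : ℕ)) ≤
        Real.exp (Real.exp 4 * Af f + 4 * Real.exp 8) := by
  set δ : ℝ := 4 / Real.log T with hδdef
  set N : ℕ := ⌊T⌋₊ + 1 with hNdef
  have hlog : 8 ≤ Real.log T := logT_pos hT
  have hδ1 : δ < 1 := by
    rw [hδdef, div_lt_one (by linarith)]
    linarith
  obtain ⟨h1, h2⟩ := EulerProduct.summable_and_hasSum_smoothNumbers_prod_primesBelow_tsum
    (f := gd f δ) (gd_one δ) (fun {m n} h => gd_mul δ h)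
    (fun {p} hp => summable_gd_pow hδ1 hp) N
  have hsummable : Summable (fun m : ↥(N.smoothNumbers) => gd f δ (m : ℕ)) :=
    h1.congr fun m => Real.norm_of_nonneg (gd_nonneg _ _)
  refine ⟨hsummable, ?_⟩
  rw [h2.tsum_eq]
  have hfac : ∀ p ∈ N.primesBelow, (∑' k : ℕ, gd f δ (p ^ k)) ≤
      Real.exp (Real.exp 4 * gf f p + 4 * Real.exp 8 * (1 / (p:ℝ) ^ 2)) := by
    intro p hpmem
    have hpp : p.Prime := Nat.prime_of_mem_primesBelow hpmem
    have hpN : p < N := Nat.lt_of_mem_primesBelow hpmem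
    have hpT : (p : ℝ) ≤ T := by
      have h1' : p ≤ ⌊T⌋₊ := by omega
      have h2' : ((⌊T⌋₊ : ℕ) : ℝ) ≤ T := Nat.floor_le (T_pos hT).le
      calc (p:ℝ) ≤ (⌊T⌋₊ : ℝ) := by exact_mod_cast h1'
      _ ≤ T := h2'
    obtain ⟨hr34, hrp⟩ := rankin_r_facts hT hpp hpT
    have hp0 : (0:ℝ) < (p:ℝ) := by exact_mod_cast hpp.pos
    have hr0 : (0:ℝ) ≤ (p:ℝ) ^ (δ - 1) := Real.rpow_nonneg hp0.le _
    have hsum : Summable (fun k : ℕ => gd f δ (p ^ k)) :=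
      (summable_gd_pow hδ1 hpp).congr fun k => Real.norm_of_nonneg (gd_nonneg _ _)
    have e0 : gd f δ (p ^ (0:ℕ)) = 1 := by rw [pow_zero]; exact gd_one δ
    have tail : (∑' k : ℕ, gd f δ (p ^ (k + 1 + 1))) ≤ 4 * ((p:ℝ) ^ (δ - 1)) ^ 2 :=
      tsum_tail_le hr0 hr34 (fun k => gd_nonneg _ _) (fun k => gd_pow_le δ hpp.pos k)
    have hgdp : gd f δ (p ^ (1:ℕ)) ≤ Real.exp 4 * gf f p := by
      rw [pow_one]
      unfold gd gf
      calc uf f p * (p:ℝ) ^ (δ - 1) ≤ uf f p * (Real.exp 4 / (p:ℝ)) :=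
        mul_le_mul_of_nonneg_left hrp (uf_nonneg f p)
      _ = Real.exp 4 * (uf f p / (p:ℝ)) := by ring
    have hr2 : 4 * ((p:ℝ) ^ (δ - 1)) ^ 2 ≤ 4 * Real.exp 8 * (1 / (p:ℝ) ^ 2) := by
      have : ((p:ℝ) ^ (δ - 1)) ^ 2 ≤ (Real.exp 4 / (p:ℝ)) ^ 2 := by
        apply pow_le_pow_left₀ hr0 hrp
      calc 4 * ((p:ℝ) ^ (δ - 1)) ^ 2 ≤ 4 * (Real.exp 4 / (p:ℝ)) ^ 2 := by linarith
      _ = 4 * Real.exp 8 * (1 / (p:ℝ) ^ 2) := by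
          rw [div_pow, ← Real.exp_nat_mul]
          push_cast
          ring_nf
    calc (∑' k : ℕ, gd f δ (p ^ k)) =
        gd f δ (p ^ (0:ℕ)) + (gd f δ (p ^ (0+1:ℕ)) + ∑' k : ℕ, gd f δ (p ^ (k + 1 + 1))) := by
          rw [Summable.tsum_eq_zero_add hsum, Summable.tsum_eq_zero_add ((summable_nat_add_iff 1).2 hsum)]
    _ ≤ 1 + (Real.exp 4 * gf f p + 4 * Real.exp 8 * (1 / (p:ℝ) ^ 2)) := by
          rw [e0]
          have := le_trans tail hr2
          simpa using add_le_add (by simpa using hgdp) this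
    _ = (Real.exp 4 * gf f p + 4 * Real.exp 8 * (1 / (p:ℝ) ^ 2)) + 1 := by ring
    _ ≤ Real.exp (Real.exp 4 * gf f p + 4 * Real.exp 8 * (1 / (p:ℝ) ^ 2)) :=
          Real.add_one_le_exp _
  calc (∏ p ∈ N.primesBelow, ∑' k : ℕ, gd f δ (p ^ k)) ≤
      ∏ p ∈ N.primesBelow, Real.exp (Real.exp 4 * gf f p + 4 * Real.exp 8 * (1 / (p:ℝ) ^ 2)) :=
        Finset.prod_le_prod (fun p _ => tsum_nonneg fun k => gd_nonneg _ _) hfac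
  _ = Real.exp (∑ p ∈ N.primesBelow, (Real.exp 4 * gf f p + 4 * Real.exp 8 * (1 / (p:ℝ) ^ 2))) :=
        (Real.exp_sum _ _).symm
  _ ≤ Real.exp (Real.exp 4 * Af f + 4 * Real.exp 8) := by
        apply Real.exp_le_exp.mpr
        rw [Finset.sum_add_distrib]
        have hA : ∑ p ∈ N.primesBelow, Real.exp 4 * gf f p ≤ Real.exp 4 * Af f := by
          rw [← Finset.mul_sum]
          exact mul_le_mul_of_nonneg_left
            (sum_primes_gf_le hS fun p hp => Nat.prime_of_mem_primesBelow hp)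
            (Real.exp_pos 4).le
        have hB : ∑ p ∈ N.primesBelow, 4 * Real.exp 8 * (1 / (p:ℝ) ^ 2) ≤ 4 * Real.exp 8 := by
          rw [← Finset.mul_sum]
          have hsub : N.primesBelow ⊆ Finset.Icc 2 N := by
            intro p hp
            have hpp : p.Prime := Nat.prime_of_mem_primesBelow hp
            have : p < N := Nat.lt_of_mem_primesBelow hp
            exact Finset.mem_Icc.mpr ⟨hpp.two_le, by omega⟩
          have hsum2 : ∑ p ∈ N.primesBelow, (1 / (p:ℝ) ^ 2) ≤ 1 := by
            calc ∑ p ∈ N.primesBelow, (1 / (p:ℝ) ^ 2)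
                ≤ ∑ p ∈ Finset.Icc 2 N, (1 / (p:ℝ) ^ 2) :=
                  Finset.sum_le_sum_of_subset_of_nonneg hsub (fun p _ _ => by positivity)
            _ ≤ 1 / ((2:ℝ) - 1) := sum_inv_sq_le 2 N le_rfl
            _ = 1 := by norm_num
          calc 4 * Real.exp 8 * ∑ p ∈ N.primesBelow, (1 / (p:ℝ) ^ 2)
              ≤ 4 * Real.exp 8 * 1 := by
                apply mul_le_mul_of_nonneg_left hsum2 (by positivity)
          _ = 4 * Real.exp 8 := by ring
        linarith

end Euler2

section Rough

variable {f : ℕ → ℝ}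
  (hS : Summable (fun p : Nat.Primes => if f (p : ℕ) ≠ 0 then (1 : ℝ) / ((p : ℕ) : ℝ) else 0))

include hS in
/-- per-prime extraction: sum of `gf` over multiples of `p` in a finite set. -/
lemma sum_multiples_le {p : ℕ} (hpp : p.Prime) (D : Finset ℕ) (hD : ∀ m ∈ D, p ∣ m ∧ m ≠ 0) :
    ∑ m ∈ D, gf f m ≤ Real.exp (Af f + 4) * (gf f p + 4 * (1 / (p:ℝ)) ^ 2) := by
  classical
  set M : ℕ := D.sup id with hM
  have hp2 : (2:ℝ) ≤ (p:ℝ) := by exact_mod_cast hpp.two_le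
  have hmaps : ∀ m ∈ D, m.factorization p ∈ Finset.Icc 1 M := by
    intro m hm
    obtain ⟨hdvd, hm0⟩ := hD m hm
    have h1 : 0 < m.factorization p := hpp.factorization_pos_of_dvd hm0 hdvd
    have h2 : p ^ m.factorization p ∣ m := Nat.ordProj_dvd m p
    have h3 : p ^ m.factorization p ≤ m := Nat.le_of_dvd (Nat.pos_of_ne_zero hm0) h2
    have h4 : m.factorization p < 2 ^ m.factorization p := Nat.lt_two_pow_self
    have h5 : 2 ^ m.factorization p ≤ p ^ m.factorization p :=
      Nat.pow_le_pow_left hpp.two_le _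
    have h6 : m ≤ M := Finset.le_sup (f := id) hm
    exact Finset.mem_Icc.mpr ⟨h1, by omega⟩
  rw [← Finset.sum_fiberwise_of_maps_to hmaps (gf f)]
  have hinner : ∀ k ∈ Finset.Icc 1 M,
      (∑ m ∈ D.filter (fun m => m.factorization p = k), gf f m) ≤
        gf f (p ^ k) * Real.exp (Af f + 4) := by
    intro k hk
    set E := D.filter (fun m => m.factorization p = k) with hE
    have hsplit : ∀ m ∈ E, gf f m = gf f (p ^ k) * gf f (m / p ^ k) := by
      intro m hm
      obtain ⟨hmD, hfk⟩ := Finset.mem_filter.mp hm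
      obtain ⟨hdvd, hm0⟩ := hD m hmD
      have hrec : p ^ k * (m / p ^ k) = m := by
        rw [← hfk]; exact Nat.ordProj_mul_ordCompl_eq_self m p
      have hcop : Nat.Coprime (p ^ k) (m / p ^ k) := by
        apply Nat.Coprime.pow_left
        have := Nat.coprime_ordCompl hpp hm0
        rwa [hfk] at this
      calc gf f m = gf f (p ^ k * (m / p ^ k)) := by rw [hrec]
      _ = gf f (p ^ k) * gf f (m / p ^ k) := gf_mul f hcop
    rw [Finset.sum_congr rfl hsplit, ← Finset.mul_sum]
    apply mul_le_mul_of_nonneg_left ?_ (gf_nonneg f _)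
    have hinj : ∀ m₁ ∈ E, ∀ m₂ ∈ E, m₁ / p ^ k = m₂ / p ^ k → m₁ = m₂ := by
      intro m₁ h₁ m₂ h₂ heq
      obtain ⟨h₁D, hf₁⟩ := Finset.mem_filter.mp h₁
      obtain ⟨h₂D, hf₂⟩ := Finset.mem_filter.mp h₂
      have e₁ : p ^ k * (m₁ / p ^ k) = m₁ := by
        rw [← hf₁]; exact Nat.ordProj_mul_ordCompl_eq_self m₁ p
      have e₂ : p ^ k * (m₂ / p ^ k) = m₂ := by
        rw [← hf₂]; exact Nat.ordProj_mul_ordCompl_eq_self m₂ p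
      rw [← e₁, ← e₂, heq]
    calc ∑ m ∈ E, gf f (m / p ^ k) = ∑ m' ∈ E.image (· / p ^ k), gf f m' :=
          (Finset.sum_image hinj).symm
    _ ≤ Real.exp (Af f + 4) := sum_gf_finset_le hS _
  calc ∑ k ∈ Finset.Icc 1 M, ∑ m ∈ D.filter (fun m => m.factorization p = k), gf f m
      ≤ ∑ k ∈ Finset.Icc 1 M, gf f (p ^ k) * Real.exp (Af f + 4) :=
        Finset.sum_le_sum hinner
  _ = (∑ k ∈ Finset.Icc 1 M, gf f (p ^ k)) * Real.exp (Af f + 4) := by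
        rw [Finset.sum_mul]
  _ ≤ (gf f p + 4 * (1 / (p:ℝ)) ^ 2) * Real.exp (Af f + 4) := by
        apply mul_le_mul_of_nonneg_right ?_ (Real.exp_pos _).le
        rcases Nat.eq_zero_or_pos M with hM0 | hM1
        · rw [hM0, Finset.Icc_eq_empty_of_lt (by norm_num : (0:ℕ) < 1), Finset.sum_empty]
          have := gf_nonneg f p
          positivity
        · have h1mem : 1 ∈ Finset.Icc 1 M := Finset.mem_Icc.mpr ⟨le_rfl, hM1⟩
          rw [← Finset.sum_erase_add _ _ h1mem, Finset.Icc_erase_left]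
          have htail : ∑ k ∈ Finset.Ioc 1 M, gf f (p ^ k) ≤ 4 * (1 / (p:ℝ)) ^ 2 := by
            calc ∑ k ∈ Finset.Ioc 1 M, gf f (p ^ k) ≤
                ∑ k ∈ Finset.Ioc 1 M, (1 / (p:ℝ)) ^ k :=
                  Finset.sum_le_sum fun k _ => gf_pow_le f hpp.pos k
            _ ≤ 4 * (1 / (p:ℝ)) ^ 2 := by
                  apply sum_geom_from_two (by positivity)
                    (by rw [div_le_div_iff₀ (by linarith) (by norm_num)]; linarith)
                  intro k hk
                  exact Finset.mem_Ioc.mp hk |>.1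
          rw [pow_one]
          linarith
  _ = Real.exp (Af f + 4) * (gf f p + 4 * (1 / (p:ℝ)) ^ 2) := by ring

include hS in
lemma sum_rough_le {x T : ℝ} (hx : 1 ≤ x) (hT : 2 ≤ T) (s : Finset ℕ) :
    ∑ m ∈ s, (if Real.sqrt x < (m:ℝ) ∧ m ∉ ((⌊T⌋₊ + 1).smoothNumbers) then gf f m else 0) ≤
      Real.exp (Af f + 4) * (alphaf f T + 8 / T) := by
  classical
  set N : ℕ := ⌊T⌋₊ + 1 with hN
  set s' := s.filter (fun m : ℕ => Real.sqrt x < (m:ℝ) ∧ m ∉ N.smoothNumbers) with hs'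
  have hx1 : (1:ℝ) ≤ Real.sqrt x := by
    rw [show (1:ℝ) = Real.sqrt 1 from (Real.sqrt_one).symm]
    exact Real.sqrt_le_sqrt hx
  have hLHS : ∑ m ∈ s, (if Real.sqrt x < (m:ℝ) ∧ m ∉ N.smoothNumbers then gf f m else 0)
      = ∑ m ∈ s', gf f m :=
    (Finset.sum_filter (fun m : ℕ => Real.sqrt x < (m:ℝ) ∧ m ∉ N.smoothNumbers) (gf f)).symm
  rw [hLHS]
  set M : ℕ := s.sup id with hM
  set P := (Finset.range (M+1)).filter (fun p : ℕ => p.Prime ∧ T < (p:ℝ)) with hP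
  have hmem : ∀ m ∈ s', ∃ p ∈ P, p ∣ m := by
    intro m hm
    have hmf := Finset.mem_filter.mp hm
    have hms := hmf.1
    have hsqrt := hmf.2.1
    have hnsm := hmf.2.2
    have hm0 : m ≠ 0 := by
      intro h0
      rw [h0] at hsqrt
      norm_num at hsqrt
      linarith
    rw [Nat.mem_smoothNumbers] at hnsm
    push_neg at hnsm
    obtain ⟨q, hq_mem, hq_ge⟩ := hnsm hm0
    have hq_prime : q.Prime := Nat.prime_of_mem_primeFactorsList hq_mem
    have hq_dvd : q ∣ m := Nat.dvd_of_mem_primeFactorsList hq_mem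
    have hqT : T < (q:ℝ) := by
      have h1 : N ≤ q := by omega
      have h2 : T < (N:ℝ) := by
        rw [hN]; push_cast; exact Nat.lt_floor_add_one T
      calc T < (N:ℝ) := h2
      _ ≤ (q:ℝ) := by exact_mod_cast h1
    have hq_le : q ≤ m := Nat.le_of_dvd (Nat.pos_of_ne_zero hm0) hq_dvd
    have hm_le : m ≤ M := Finset.le_sup (f := id) hms
    refine ⟨q, Finset.mem_filter.mpr ⟨Finset.mem_range.mpr (by omega), hq_prime, hqT⟩, hq_dvd⟩
  have step1 : ∑ m ∈ s', gf f m ≤ ∑ m ∈ s', ∑ p ∈ P, (if p ∣ m then gf f m else 0) := by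
    apply Finset.sum_le_sum
    intro m hm
    obtain ⟨p, hpP, hpd⟩ := hmem m hm
    calc gf f m = (if p ∣ m then gf f m else 0) := by rw [if_pos hpd]
    _ ≤ ∑ q ∈ P, (if q ∣ m then gf f m else 0) := by
        apply Finset.single_le_sum (fun q _ => ?_) hpP
        split_ifs <;> [exact gf_nonneg f m; exact le_rfl]
  have step2 : ∑ m ∈ s', ∑ p ∈ P, (if p ∣ m then gf f m else 0)
      = ∑ p ∈ P, ∑ m ∈ s'.filter (fun m => p ∣ m), gf f m := by
    rw [Finset.sum_comm]
    exact Finset.sum_congr rfl fun p _ => (Finset.sum_filter _ _)  |>.symm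
  have step3 : ∀ p ∈ P, ∑ m ∈ s'.filter (fun m => p ∣ m), gf f m ≤
      Real.exp (Af f + 4) * (gf f p + 4 * (1 / (p:ℝ)) ^ 2) := by
    intro p hpP
    have hpf := Finset.mem_filter.mp hpP
    have hpp := hpf.2.1
    have hpT := hpf.2.2
    apply sum_multiples_le hS hpp
    intro m hm
    obtain ⟨hms', hpd⟩ := Finset.mem_filter.mp hm
    have hmf2 := Finset.mem_filter.mp hms'
    have hsqrt := hmf2.2.1
    refine ⟨hpd, fun h0 => ?_⟩
    rw [h0] at hsqrt
    norm_num at hsqrt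
    linarith
  have step4 : ∑ p ∈ P, (Real.exp (Af f + 4) * (gf f p + 4 * (1 / (p:ℝ)) ^ 2)) ≤
      Real.exp (Af f + 4) * (alphaf f T + 8 / T) := by
    have hPprime : ∀ p ∈ P, p.Prime ∧ T < (p:ℝ) := fun p hp =>
      (Finset.mem_filter.mp hp).2
    have hsum1 : ∑ p ∈ P, gf f p ≤ alphaf f T := sum_primes_gf_le_alphaf hS hPprime
    have hsum2 : ∑ p ∈ P, (1 / (p:ℝ)) ^ 2 ≤ 2 / T := by
      have hsubset : P ⊆ Finset.Icc (⌊T⌋₊ + 1) M := by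
        intro p hp
        have hpf3 := Finset.mem_filter.mp hp
        have hpr := hpf3.1
        have hpT := hpf3.2.2
        have h1 : ⌊T⌋₊ < p := by
          by_contra hcon
          push_neg at hcon
          have : (p:ℝ) ≤ T := le_trans (by exact_mod_cast hcon) (Nat.floor_le (by linarith))
          linarith
        have h2 : p ≤ M := by
          have := Finset.mem_range.mp hpr
          omega
        exact Finset.mem_Icc.mpr ⟨by omega, h2⟩
      have hfl2 : 2 ≤ ⌊T⌋₊ := Nat.le_floor (by exact_mod_cast hT)
      calc ∑ p ∈ P, (1 / (p:ℝ)) ^ 2 = ∑ p ∈ P, (1 / (p:ℝ) ^ 2) := by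
            exact Finset.sum_congr rfl fun p _ => by rw [div_pow, one_pow]
      _ ≤ ∑ p ∈ Finset.Icc (⌊T⌋₊ + 1) M, (1 / (p:ℝ) ^ 2) :=
            Finset.sum_le_sum_of_subset_of_nonneg hsubset (fun p _ _ => by positivity)
      _ ≤ 1 / (((⌊T⌋₊ + 1 : ℕ):ℝ) - 1) := sum_inv_sq_le _ M (by omega)
      _ = 1 / (⌊T⌋₊ : ℝ) := by push_cast; ring_nf
      _ ≤ 2 / T := by
            have hfl : T - 1 < (⌊T⌋₊ : ℝ) := Nat.sub_one_lt_floor T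
            rw [div_le_div_iff₀ (by exact_mod_cast (by omega : 0 < ⌊T⌋₊)) (by linarith)]
            linarith
    rw [← Finset.mul_sum, Finset.sum_add_distrib]
    apply mul_le_mul_of_nonneg_left ?_ (Real.exp_pos _).le
    have h4 : ∑ p ∈ P, 4 * (1 / (p:ℝ)) ^ 2 = 4 * ∑ p ∈ P, (1 / (p:ℝ)) ^ 2 := by
      rw [Finset.mul_sum]
    rw [h4]
    have : (4:ℝ) * (2 / T) = 8 / T := by ring
    nlinarith [hsum1, hsum2]
  calc ∑ m ∈ s', gf f m ≤ ∑ p ∈ P, ∑ m ∈ s'.filter (fun m => p ∣ m), gf f m := by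
        rw [← step2]; exact step1
  _ ≤ ∑ p ∈ P, (Real.exp (Af f + 4) * (gf f p + 4 * (1 / (p:ℝ)) ^ 2)) :=
        Finset.sum_le_sum step3
  _ ≤ Real.exp (Af f + 4) * (alphaf f T + 8 / T) := step4

end Rough

section Master

variable {f : ℕ → ℝ}
  (hS : Summable (fun p : Nat.Primes => if f (p : ℕ) ≠ 0 then (1 : ℝ) / ((p : ℕ) : ℝ) else 0))

include hS in
lemma master {x T : ℝ} (hx : 2 ≤ x) (hT : Real.exp 8 ≤ T) :
    (∑' m : ℕ, if Real.sqrt x < (m : ℝ) then uf f m / m else 0) ≤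
      x ^ (-(2 / Real.log T)) * Real.exp (Real.exp 4 * Af f + 4 * Real.exp 8) +
        Real.exp (Af f + 4) * (alphaf f T + 8 / T) := by
  classical
  have hlog : 8 ≤ Real.log T := logT_pos hT
  have hx0 : (0:ℝ) < x := by linarith
  have hT2 : (2:ℝ) ≤ T := le_trans (by nlinarith [Real.add_one_le_exp (8:ℝ)]) hT
  have hsplit : ∀ m : ℕ, (if Real.sqrt x < (m : ℝ) then gf f m else 0) =
      (if Real.sqrt x < (m : ℝ) ∧ m ∈ (⌊T⌋₊ + 1).smoothNumbers then gf f m else 0) +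
      (if Real.sqrt x < (m : ℝ) ∧ m ∉ (⌊T⌋₊ + 1).smoothNumbers then gf f m else 0) := by
    intro m
    by_cases h1 : Real.sqrt x < (m:ℝ) <;> by_cases h2 : m ∈ (⌊T⌋₊ + 1).smoothNumbers <;>
      simp [h1, h2]
  have hgf := summable_gf hS
  have hS_S : Summable (fun m : ℕ =>
      if Real.sqrt x < (m : ℝ) ∧ m ∈ (⌊T⌋₊ + 1).smoothNumbers then gf f m else 0) := by
    apply Summable.of_nonneg_of_le _ _ hgf <;> intro m <;> split_ifs <;>
      first | exact le_rfl | exact gf_nonneg f m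
  have hS_R : Summable (fun m : ℕ =>
      if Real.sqrt x < (m : ℝ) ∧ m ∉ (⌊T⌋₊ + 1).smoothNumbers then gf f m else 0) := by
    apply Summable.of_nonneg_of_le _ _ hgf <;> intro m <;> split_ifs <;>
      first | exact le_rfl | exact gf_nonneg f m
  have hsm_summable : Summable (((⌊T⌋₊ + 1).smoothNumbers : Set ℕ).indicator
      (gd f (4 / Real.log T))) := by
    rw [← summable_subtype_iff_indicator]
    exact (tsum_smooth_gd hS hT).1
  -- pointwise Rankin bound on the smooth part
  have hpoint : ∀ m : ℕ,
      (if Real.sqrt x < (m : ℝ) ∧ m ∈ (⌊T⌋₊ + 1).smoothNumbers then gf f m else 0) ≤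
      x ^ (-(2 / Real.log T)) *
        ((⌊T⌋₊ + 1).smoothNumbers : Set ℕ).indicator (gd f (4 / Real.log T)) m := by
    intro m
    by_cases h : Real.sqrt x < (m : ℝ) ∧ m ∈ (⌊T⌋₊ + 1).smoothNumbers
    · rw [if_pos h, Set.indicator_of_mem h.2]
      obtain ⟨hlt, _⟩ := h
      have hm1 : (1:ℝ) ≤ (m:ℝ) := by
        have h1 : (1:ℝ) ≤ Real.sqrt x := by
          rw [show (1:ℝ) = Real.sqrt 1 from (Real.sqrt_one).symm]
          exact Real.sqrt_le_sqrt (by linarith)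
        linarith
      have hm0 : (0:ℝ) < (m:ℝ) := by linarith
      have hkey : x ^ (2 / Real.log T) ≤ (m:ℝ) ^ (4 / Real.log T) := by
        have h1 : Real.sqrt x ^ (4 / Real.log T) ≤ (m:ℝ) ^ (4 / Real.log T) :=
          Real.rpow_le_rpow (Real.sqrt_nonneg x) hlt.le (by positivity)
        have h2 : Real.sqrt x ^ (4 / Real.log T) = x ^ (2 / Real.log T) := by
          rw [Real.sqrt_eq_rpow, ← Real.rpow_mul hx0.le]
          congr 1
          field_simp
          ring
        rw [← h2]
        exact h1
      have hxa : (0:ℝ) < x ^ (2 / Real.log T) := Real.rpow_pos_of_pos hx0 _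
      have e1 : x ^ (-(2 / Real.log T)) = (x ^ (2 / Real.log T))⁻¹ :=
        Real.rpow_neg hx0.le _
      have e2 : (m:ℝ) ^ (4 / Real.log T - 1) = (m:ℝ) ^ (4 / Real.log T) / (m:ℝ) := by
        rw [Real.rpow_sub hm0, Real.rpow_one]
      have hfrac : (1:ℝ) / (m:ℝ) ≤
          (x ^ (2 / Real.log T))⁻¹ * (m:ℝ) ^ (4 / Real.log T - 1) := by
        rw [e2, div_le_iff₀ hm0]
        have e3 : (x ^ (2 / Real.log T))⁻¹ * ((m:ℝ) ^ (4 / Real.log T) / (m:ℝ)) * (m:ℝ) =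
            (m:ℝ) ^ (4 / Real.log T) / x ^ (2 / Real.log T) := by field_simp
        rw [e3, le_div_iff₀ hxa, one_mul]
        exact hkey
      calc gf f m = uf f m * (1 / (m:ℝ)) := by unfold gf; rw [mul_one_div]
      _ ≤ uf f m * ((x ^ (2 / Real.log T))⁻¹ * (m:ℝ) ^ (4 / Real.log T - 1)) :=
          mul_le_mul_of_nonneg_left hfrac (uf_nonneg f m)
      _ = x ^ (-(2 / Real.log T)) * gd f (4 / Real.log T) m := by
          rw [e1]; simp only [gd]; ring
    · rw [if_neg h]
      have h1 : 0 ≤ (((⌊T⌋₊ + 1).smoothNumbers : Set ℕ)).indicator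
          (gd f (4 / Real.log T)) m :=
        Set.indicator_apply_nonneg fun _ => gd_nonneg _ m
      have h2 : (0:ℝ) ≤ x ^ (-(2 / Real.log T)) := Real.rpow_nonneg hx0.le _
      exact mul_nonneg h2 h1
  have hsmooth : (∑' m : ℕ,
      if Real.sqrt x < (m : ℝ) ∧ m ∈ (⌊T⌋₊ + 1).smoothNumbers then gf f m else 0) ≤
      x ^ (-(2 / Real.log T)) * Real.exp (Real.exp 4 * Af f + 4 * Real.exp 8) := by
    calc (∑' m : ℕ,
        if Real.sqrt x < (m : ℝ) ∧ m ∈ (⌊T⌋₊ + 1).smoothNumbers then gf f m else 0) ≤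
        ∑' m : ℕ, x ^ (-(2 / Real.log T)) *
          ((⌊T⌋₊ + 1).smoothNumbers : Set ℕ).indicator (gd f (4 / Real.log T)) m :=
          Summable.tsum_le_tsum hpoint hS_S (hsm_summable.mul_left _)
    _ = x ^ (-(2 / Real.log T)) * ∑' m : ℕ,
          ((⌊T⌋₊ + 1).smoothNumbers : Set ℕ).indicator (gd f (4 / Real.log T)) m :=
          tsum_mul_left
    _ = x ^ (-(2 / Real.log T)) *
          ∑' m : ↥((⌊T⌋₊ + 1).smoothNumbers), gd f (4 / Real.log T) (m : ℕ) := by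
          rw [_root_.tsum_subtype]
    _ ≤ x ^ (-(2 / Real.log T)) * Real.exp (Real.exp 4 * Af f + 4 * Real.exp 8) :=
          mul_le_mul_of_nonneg_left (tsum_smooth_gd hS hT).2 (Real.rpow_nonneg hx0.le _)
  have hrough : (∑' m : ℕ,
      if Real.sqrt x < (m : ℝ) ∧ m ∉ (⌊T⌋₊ + 1).smoothNumbers then gf f m else 0) ≤
      Real.exp (Af f + 4) * (alphaf f T + 8 / T) :=
    Summable.tsum_le_of_sum_le hS_R (fun s => sum_rough_le hS (by linarith) hT2 s)
  calc (∑' m : ℕ, if Real.sqrt x < (m : ℝ) then uf f m / m else 0)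
      = ∑' m : ℕ, ((if Real.sqrt x < (m : ℝ) ∧ m ∈ (⌊T⌋₊ + 1).smoothNumbers then gf f m else 0) +
        (if Real.sqrt x < (m : ℝ) ∧ m ∉ (⌊T⌋₊ + 1).smoothNumbers then gf f m else 0)) :=
        tsum_congr hsplit
  _ = (∑' m : ℕ, if Real.sqrt x < (m : ℝ) ∧ m ∈ (⌊T⌋₊ + 1).smoothNumbers then gf f m else 0) +
      (∑' m : ℕ, if Real.sqrt x < (m : ℝ) ∧ m ∉ (⌊T⌋₊ + 1).smoothNumbers then gf f m else 0) :=
        Summable.tsum_add hS_S hS_R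
  _ ≤ x ^ (-(2 / Real.log T)) * Real.exp (Real.exp 4 * Af f + 4 * Real.exp 8) +
        Real.exp (Af f + 4) * (alphaf f T + 8 / T) := add_le_add hsmooth hrough

end Master

end UfTailAux

set_option maxHeartbeats 1000000 in
/-- Tail estimate for `Σ_{m > √x} u_f(m)/m`: for `x ≥ 2` and all sufficiently large
`T ≥ 2`, the tail is `≪ x^{−2/log T} log T + α_f(T) + 1/T`; in particular, with
`T := x^{1/log₂ x}`, it is `≪ α_f(x^{1/log₂x}) + 1/(log x)^{1/6} + 1/x^c` for some
absolute `c > 0` when `x` is large. -/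
theorem uf_tail_estimate :
    ∃ c : ℝ, 0 < c ∧
      ∀ f : ℕ → ℝ, IsAdditive f →
        Summable (fun p : Nat.Primes => if f (p : ℕ) ≠ 0 then (1 : ℝ) / ((p : ℕ) : ℝ) else 0) →
        ∃ C : ℝ, 0 < C ∧ ∃ T₀ : ℝ, 2 ≤ T₀ ∧
          (∀ x T : ℝ, 2 ≤ x → T₀ ≤ T →
            (∑' m : ℕ, if Real.sqrt x < (m : ℝ) then uf f m / m else 0) ≤
              C * (x ^ (-(2 / Real.log T)) * Real.log T + alphaf f T + 1 / T)) ∧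
          ∃ x₀ : ℝ, ∀ x : ℝ, x₀ ≤ x →
            (∑' m : ℕ, if Real.sqrt x < (m : ℝ) then uf f m / m else 0) ≤
              C * (alphaf f (x ^ (1 / Real.log (Real.log x)))
                + 1 / Real.log x ^ ((1:ℝ)/6) + 1 / x ^ c) := by

  classical
  refine ⟨1, one_pos, ?_⟩
  intro f _ hS
  set K2 : ℝ := Real.exp (Real.exp 4 * UfTailAux.Af f + 4 * Real.exp 8) with hK2
  set K1 : ℝ := Real.exp (UfTailAux.Af f + 4) with hK1
  set C : ℝ := K2 + 8 * K1 + 1 with hC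
  have hK1p : 0 < K1 := Real.exp_pos _
  have hK2p : 0 < K2 := Real.exp_pos _
  have hCp : 0 < C := by positivity
  have hb1 : ∀ x T : ℝ, 2 ≤ x → Real.exp 8 ≤ T →
      (∑' m : ℕ, if Real.sqrt x < (m : ℝ) then uf f m / m else 0) ≤
        C * (x ^ (-(2 / Real.log T)) * Real.log T + alphaf f T + 1 / T) := by
    intro x T hx hT
    have hmaster := UfTailAux.master hS hx hT
    have hα : 0 ≤ alphaf f T := UfTailAux.alphaf_nonneg hS T
    have hlog : 8 ≤ Real.log T := UfTailAux.logT_pos hT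
    have hT0 : 0 < T := UfTailAux.T_pos hT
    have hxa : 0 ≤ x ^ (-(2 / Real.log T)) := Real.rpow_nonneg (by linarith) _
    have h1T : 0 ≤ 1 / T := by positivity
    refine le_trans hmaster ?_
    have hxalog : x ^ (-(2 / Real.log T)) ≤ x ^ (-(2 / Real.log T)) * Real.log T := by
      nlinarith [mul_nonneg hxa (by linarith : (0:ℝ) ≤ Real.log T - 1)]
    have h1 : x ^ (-(2 / Real.log T)) * K2 ≤
        C * (x ^ (-(2 / Real.log T)) * Real.log T) := by
      calc x ^ (-(2 / Real.log T)) * K2 ≤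
          (x ^ (-(2 / Real.log T)) * Real.log T) * K2 :=
            mul_le_mul_of_nonneg_right hxalog hK2p.le
      _ ≤ (x ^ (-(2 / Real.log T)) * Real.log T) * C := by
            apply mul_le_mul_of_nonneg_left (by linarith) ?_
            nlinarith
      _ = C * (x ^ (-(2 / Real.log T)) * Real.log T) := mul_comm _ _
    have h2 : K1 * (alphaf f T + 8 / T) ≤ C * alphaf f T + C * (1 / T) := by
      have e2 : K1 * alphaf f T ≤ C * alphaf f T :=
        mul_le_mul_of_nonneg_right (by linarith) hα
      have e3 : (8 * K1) * (1 / T) ≤ C * (1 / T) :=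
        mul_le_mul_of_nonneg_right (by linarith) h1T
      calc K1 * (alphaf f T + 8 / T) = K1 * alphaf f T + (8 * K1) * (1 / T) := by ring
      _ ≤ C * alphaf f T + C * (1 / T) := add_le_add e2 e3
    calc x ^ (-(2 / Real.log T)) * K2 + K1 * (alphaf f T + 8 / T) ≤
        C * (x ^ (-(2 / Real.log T)) * Real.log T) + (C * alphaf f T + C * (1 / T)) :=
          add_le_add h1 h2
    _ = C * (x ^ (-(2 / Real.log T)) * Real.log T + alphaf f T + 1 / T) := by ring
  have hT₀2 : (2:ℝ) ≤ Real.exp 8 := by nlinarith [Real.add_one_le_exp (8:ℝ)]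
  refine ⟨C, hCp, Real.exp 8, hT₀2, hb1, Real.exp (Real.exp 30), ?_⟩
  intro x hx
  have hee : (0:ℝ) < Real.exp (Real.exp 30) := Real.exp_pos _
  have hx0 : 0 < x := lt_of_lt_of_le hee hx
  have he30 : (31:ℝ) ≤ Real.exp 30 := by nlinarith [Real.add_one_le_exp (30:ℝ)]
  have hx2 : 2 ≤ x := by
    have : Real.exp 30 + 1 ≤ Real.exp (Real.exp 30) := Real.add_one_le_exp _
    linarith
  set L := Real.log x with hLdef
  have hL : Real.exp 30 ≤ L := by
    rw [hLdef]
    calc Real.exp 30 = Real.log (Real.exp (Real.exp 30)) := (Real.log_exp _).symm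
    _ ≤ Real.log x := Real.log_le_log hee hx
  have hL0 : 0 < L := lt_of_lt_of_le (Real.exp_pos 30) hL
  have hL1 : 1 ≤ L := by linarith
  set LL := Real.log L with hLLdef
  have hLL : 30 ≤ LL := by
    rw [hLLdef]
    calc (30:ℝ) = Real.log (Real.exp 30) := (Real.log_exp _).symm
    _ ≤ Real.log L := Real.log_le_log (Real.exp_pos _) hL
  have hLL0 : 0 < LL := by linarith
  have hexpLL : Real.exp LL = L := by rw [hLLdef]; exact Real.exp_log hL0
  have hLpoly : LL ^ 4 / 256 ≤ L := by
    have h1 : LL / 4 ≤ Real.exp (LL / 4) := by nlinarith [Real.add_one_le_exp (LL/4)]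
    have h2 : Real.exp LL = (Real.exp (LL / 4)) ^ 4 := by
      rw [← Real.exp_nat_mul]
      congr 1
      push_cast
      ring
    have h3 : (LL / 4) ^ 4 ≤ (Real.exp (LL / 4)) ^ 4 :=
      pow_le_pow_left₀ (by positivity) h1 4
    calc LL ^ 4 / 256 = (LL / 4) ^ 4 := by ring
    _ ≤ (Real.exp (LL / 4)) ^ 4 := h3
    _ = L := by rw [← h2, hexpLL]
  have h27 : (27000:ℝ) ≤ LL ^ 3 := by
    have := pow_le_pow_left₀ (by norm_num : (0:ℝ) ≤ 30) hLL 3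
    norm_num at this
    linarith
  have hcube : 8 * LL ≤ L := by
    nlinarith [hLpoly, mul_le_mul_of_nonneg_right h27 hLL0.le]
  set T := x ^ (1 / LL) with hTdef
  clear_value T
  have hT0 : 0 < T := by rw [hTdef]; exact Real.rpow_pos_of_pos hx0 _
  have hlogT : Real.log T = L / LL := by
    rw [hTdef, Real.log_rpow hx0, ← hLdef]
    ring
  have hlogT8 : 8 ≤ Real.log T := by
    rw [hlogT, le_div_iff₀ hLL0]
    linarith
  have hTexp : Real.exp 8 ≤ T := by
    calc Real.exp 8 ≤ Real.exp (Real.log T) := Real.exp_le_exp.mpr hlogT8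
    _ = T := Real.exp_log hT0
  have hxa : x ^ (-(2 / Real.log T)) = Real.exp (-2 * LL) := by
    rw [Real.rpow_def_of_pos hx0, ← hLdef, hlogT]
    congr 1
    field_simp
  have hexp2LL : Real.exp (-2 * LL) = 1 / L ^ 2 := by
    rw [show (-2 * LL) = -(LL + LL) by ring, Real.exp_neg, Real.exp_add, hexpLL]
    rw [one_div]
    congr 1
    ring
  have hterm_a : x ^ (-(2 / Real.log T)) * Real.log T = 1 / (L * LL) := by
    rw [hxa, hexp2LL, hlogT]
    field_simp
  have hL16 : L ^ ((1:ℝ)/6) = Real.exp (LL / 6) := by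
    rw [Real.rpow_def_of_pos hL0, ← hLLdef]
    congr 1
    ring
  have hL16pos : 0 < L ^ ((1:ℝ)/6) := Real.rpow_pos_of_pos hL0 _
  have hL16leL : L ^ ((1:ℝ)/6) ≤ L := by
    calc L ^ ((1:ℝ)/6) ≤ L ^ (1:ℝ) :=
      Real.rpow_le_rpow_of_exponent_le hL1 (by norm_num)
    _ = L := Real.rpow_one L
  have hquot_a : 1 / (L * LL) ≤ 1/2 * (1 / L ^ ((1:ℝ)/6)) := by
    have e1 : 1/2 * (1 / L ^ ((1:ℝ)/6)) = 1 / (2 * L ^ ((1:ℝ)/6)) := by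
      rw [div_mul_div_comm, one_mul]
    rw [e1]
    apply one_div_le_one_div_of_le (by positivity)
    nlinarith
  have hquot_b : 1 / T ≤ 1/2 * (1 / L ^ ((1:ℝ)/6)) := by
    have e1 : 1/2 * (1 / L ^ ((1:ℝ)/6)) = 1 / (2 * L ^ ((1:ℝ)/6)) := by
      rw [div_mul_div_comm, one_mul]
    rw [e1]
    apply one_div_le_one_div_of_le (by positivity)
    have hTval : T = Real.exp (L / LL) := by rw [← Real.exp_log hT0, hlogT]
    rw [hTval, hL16]
    have h2e : (2:ℝ) ≤ Real.exp 1 := by nlinarith [Real.add_one_le_exp (1:ℝ)]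
    have hLdivLL : 1 + LL / 6 ≤ L / LL := by
      rw [le_div_iff₀ hLL0]
      nlinarith
    calc 2 * Real.exp (LL / 6) ≤ Real.exp 1 * Real.exp (LL / 6) :=
          mul_le_mul_of_nonneg_right h2e (Real.exp_pos _).le
    _ = Real.exp (1 + LL / 6) := (Real.exp_add _ _).symm
    _ ≤ Real.exp (L / LL) := Real.exp_le_exp.mpr hLdivLL
  have hα : 0 ≤ alphaf f T := UfTailAux.alphaf_nonneg hS T
  have hxc : 0 ≤ 1 / x ^ (1:ℝ) := by positivity
  calc (∑' m : ℕ, if Real.sqrt x < (m : ℝ) then uf f m / m else 0) ≤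
      C * (x ^ (-(2 / Real.log T)) * Real.log T + alphaf f T + 1 / T) :=
        hb1 x T hx2 hTexp
  _ ≤ C * (alphaf f T + 1 / L ^ ((1:ℝ)/6) + 1 / x ^ (1:ℝ)) := by
        apply mul_le_mul_of_nonneg_left ?_ hCp.le
        rw [hterm_a]
        linarith

end
end

section
/- Let f be a real additive function and R ≥ 3. Then, for every positive integer x and every y ∈ ℝ, one has |F_x(y; R) − F_x(y)| ≤ Σ_{p^ν > R, |f(p^ν)| > 1} 1/p^ν, where F_x(y; R) := (1/x)·#{n ≤ x : f_R(n) ≤ y} and F_x(y) := (1/x)·#{n ≤ x : f(n) ≤ y}. -/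
open Filter Topology Finset MeasureTheory
open scoped Classical

noncomputable section

lemma IsAdditive.map_one {f : ℕ → ℝ} (h : IsAdditive f) : f 1 = 0 := by
  have := h 1 1 one_pos one_pos (Nat.coprime_one_left 1)
  simp at this; linarith

lemma IsAdditive.sum_primeFactors {f : ℕ → ℝ} (h : IsAdditive f) :
    ∀ n : ℕ, 0 < n → f n = ∑ p ∈ n.primeFactors, f (p ^ n.factorization p) := by
  intro n
  induction n using Nat.recOnPosPrimePosCoprime with
  | prime_pow p k hp hk =>
    intro _
    rw [Nat.primeFactors_prime_pow hk.ne' hp, Finset.sum_singleton,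
      hp.factorization_pow, Finsupp.single_eq_same]
  | zero => exact fun h => absurd h (lt_irrefl 0)
  | one => intro _; simpa using h.map_one
  | coprime a b ha hb hab iha ihb =>
    intro _
    have ha0 : 0 < a := by omega
    have hb0 : 0 < b := by omega
    have hdisj := Nat.Coprime.disjoint_primeFactors hab
    rw [h a b ha0 hb0 hab, iha ha0, ihb hb0,
      Nat.primeFactors_mul ha0.ne' hb0.ne', Finset.sum_union hdisj]
    congr 1
    · refine Finset.sum_congr rfl fun p hp => ?_
      have hbp : b.factorization p = 0 := by
        have : p ∉ b.primeFactors := Finset.disjoint_left.mp hdisj hp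
        rwa [← Nat.support_factorization, Finsupp.notMem_support_iff] at this
      rw [Nat.factorization_mul ha0.ne' hb0.ne', Finsupp.add_apply, hbp, add_zero]
    · refine Finset.sum_congr rfl fun p hp => ?_
      have hap : a.factorization p = 0 := by
        have : p ∉ a.primeFactors := Finset.disjoint_right.mp hdisj hp
        rwa [← Nat.support_factorization, Finsupp.notMem_support_iff] at this
      rw [Nat.factorization_mul ha0.ne' hb0.ne', Finsupp.add_apply, hap, zero_add]

lemma fR_eq_f {f : ℕ → ℝ} (hadd : IsAdditive f) {R : ℝ} {n : ℕ} (hn : 0 < n)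
    (h : ∀ p ∈ n.primeFactors,
      ((p ^ (n.factorization p) : ℕ) : ℝ) ≤ R ∨ |f (p ^ (n.factorization p))| ≤ 1) :
    fR f R n = f n := by
  rw [fR, hadd.sum_primeFactors n hn]
  exact Finset.sum_congr rfl fun p hp => if_pos (h p hp)

/-- Estimate (4.2): for integral `x` and any `y`,
`|F_x(y; R) − F_x(y)| ≤ Σ_{p^ν > R, |f(p^ν)| > 1} 1/p^ν`
(the right-hand side being a sum of nonnegative terms, possibly infinite). -/
theorem Fx_truncation_error (f : ℕ → ℝ) (hadd : IsAdditive f) (R : ℝ) (hR : 3 ≤ R)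
    (x : ℕ) (hx : 0 < x) (y : ℝ) :
    ENNReal.ofReal |Fx (fR f R) (x : ℝ) y - Fx f (x : ℝ) y| ≤
      ∑' n : ℕ, if IsPrimePow n ∧ R < (n : ℝ) ∧ 1 < |f n| then ((n : ENNReal))⁻¹ else 0 := by
  classical
  have hxr : (0 : ℝ) < (x : ℝ) := by exact_mod_cast hx
  set bad : ℕ → Prop := fun q => IsPrimePow q ∧ R < (q : ℝ) ∧ 1 < |f q| with hbad
  set S : ENNReal := ∑' n : ℕ, if bad n then ((n : ENNReal))⁻¹ else 0 with hS
  set A := (Finset.Icc 1 x).filter (fun n => fR f R n ≤ y) with hA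
  set B := (Finset.Icc 1 x).filter (fun n => f n ≤ y) with hB
  set T := (Finset.Icc 1 x).filter (fun n => fR f R n ≠ f n) with hT
  have hAB : A ⊆ B ∪ T := by
    intro n hn
    rw [hA, Finset.mem_filter] at hn
    rcases le_or_gt (f n) y with h | h
    · exact Finset.mem_union_left _ (Finset.mem_filter.mpr ⟨hn.1, h⟩)
    · exact Finset.mem_union_right _ (Finset.mem_filter.mpr ⟨hn.1, by
        intro he; rw [he] at hn; exact absurd hn.2 (not_le.mpr h)⟩)
  have hBA : B ⊆ A ∪ T := by
    intro n hn
    rw [hB, Finset.mem_filter] at hn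
    rcases le_or_gt (fR f R n) y with h | h
    · exact Finset.mem_union_left _ (Finset.mem_filter.mpr ⟨hn.1, h⟩)
    · exact Finset.mem_union_right _ (Finset.mem_filter.mpr ⟨hn.1, by
        intro he; rw [he] at h; exact absurd hn.2 (not_le.mpr h)⟩)
  have hcard : |(A.card : ℝ) - (B.card : ℝ)| ≤ (T.card : ℝ) := by
    rw [abs_sub_le_iff]
    constructor
    · have h1 := (Finset.card_le_card hAB).trans (Finset.card_union_le B T)
      have h2 := (Nat.cast_le (α := ℝ)).mpr h1
      push_cast at h2 ⊢; linarith
    · have h1 := (Finset.card_le_card hBA).trans (Finset.card_union_le A T)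
      have h2 := (Nat.cast_le (α := ℝ)).mpr h1
      push_cast at h2 ⊢; linarith
  set Q := (Finset.Icc 1 x).filter bad with hQ
  set M : ℕ → Finset ℕ := fun q => (Finset.Icc 1 x).filter (q ∣ ·) with hM
  have hTQ : T ⊆ Q.biUnion M := by
    intro n hn
    rw [hT, Finset.mem_filter] at hn
    obtain ⟨hmem, hne⟩ := hn
    have hn1 : 1 ≤ n := (Finset.mem_Icc.mp hmem).1
    have hnx : n ≤ x := (Finset.mem_Icc.mp hmem).2
    have hex : ¬ ∀ p ∈ n.primeFactors,
        ((p ^ (n.factorization p) : ℕ) : ℝ) ≤ R ∨ |f (p ^ (n.factorization p))| ≤ 1 :=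
      fun h => hne (fR_eq_f hadd hn1 h)
    push_neg at hex
    obtain ⟨p, hp, hcond⟩ := hex
    set q := p ^ n.factorization p with hq
    have hpp : p.Prime := Nat.prime_of_mem_primeFactors hp
    have hk : n.factorization p ≠ 0 := by
      have : p ∈ n.factorization.support := by rwa [Nat.support_factorization]
      exact Finsupp.mem_support_iff.mp this
    have hqdvd : q ∣ n := Nat.ordProj_dvd n p
    have hq1 : 1 ≤ q := Nat.one_le_iff_ne_zero.mpr (pow_ne_zero _ hpp.pos.ne')
    have hqx : q ≤ x := le_trans (Nat.le_of_dvd hn1 hqdvd) hnx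
    refine Finset.mem_biUnion.mpr ⟨q, ?_, ?_⟩
    · refine Finset.mem_filter.mpr ⟨Finset.mem_Icc.mpr ⟨hq1, hqx⟩, ?_⟩
      exact ⟨⟨p, n.factorization p, hpp.prime, Nat.pos_of_ne_zero hk, rfl⟩,
        hcond.1, hcond.2⟩
    · exact Finset.mem_filter.mpr ⟨hmem, hqdvd⟩
  have hcount : (T.card : ENNReal) ≤ ∑ q ∈ Q, ((M q).card : ENNReal) := by
    have := (Finset.card_le_card hTQ).trans Finset.card_biUnion_le
    exact_mod_cast this
  have hMq : ∀ q ∈ Q, ((M q).card : ENNReal) ≤ (x : ENNReal) * ((q : ENNReal))⁻¹ := by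
    intro q hq'
    have hcardM : (M q).card = x / q := Nat.Ioc_filter_dvd_card_eq_div x q
    rw [hcardM]
    have hq1 : 1 ≤ q := (Finset.mem_Icc.mp (Finset.mem_filter.mp hq').1).1
    have hq0 : (q : ENNReal) ≠ 0 := by
      exact_mod_cast Nat.one_le_iff_ne_zero.mp hq1
    show ((x / q : ℕ) : ENNReal) ≤ (x : ENNReal) / (q : ENNReal)
    rw [ENNReal.le_div_iff_mul_le (Or.inl hq0) (Or.inl (ENNReal.natCast_ne_top q))]
    exact_mod_cast Nat.div_mul_le_self x q
  have hsum : (∑ q ∈ Q, ((M q).card : ENNReal)) ≤ (x : ENNReal) * S := by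
    calc ∑ q ∈ Q, ((M q).card : ENNReal)
        ≤ ∑ q ∈ Q, (x : ENNReal) * ((q : ENNReal))⁻¹ := Finset.sum_le_sum hMq
      _ = ∑ q ∈ Q, (if bad q then (x : ENNReal) * ((q : ENNReal))⁻¹ else 0) := by
          refine Finset.sum_congr rfl fun q hq' => ?_
          rw [if_pos (Finset.mem_filter.mp hq').2]
      _ ≤ ∑' q : ℕ, (if bad q then (x : ENNReal) * ((q : ENNReal))⁻¹ else 0) :=
          ENNReal.sum_le_tsum Q
      _ = (x : ENNReal) * S := by
          rw [hS, ← ENNReal.tsum_mul_left]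
          exact tsum_congr fun q => by rw [mul_ite, mul_zero]
  have hTS : (T.card : ENNReal) ≤ (x : ENNReal) * S := hcount.trans hsum
  have hfx : |Fx (fR f R) (x : ℝ) y - Fx f (x : ℝ) y| = |(A.card : ℝ) - (B.card : ℝ)| / x := by
    rw [Fx, Fx, Nat.floor_natCast, ← hA, ← hB, div_sub_div_same, abs_div, abs_of_pos hxr]
  rw [hfx]
  calc ENNReal.ofReal (|(A.card : ℝ) - (B.card : ℝ)| / x)
      ≤ ENNReal.ofReal ((T.card : ℝ) / x) := by
        apply ENNReal.ofReal_le_ofReal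
        gcongr
    _ = (T.card : ENNReal) / (x : ENNReal) := by
        rw [ENNReal.ofReal_div_of_pos hxr, ENNReal.ofReal_natCast, ENNReal.ofReal_natCast]
    _ ≤ ((x : ENNReal) * S) / (x : ENNReal) := ENNReal.div_le_div_right hTS _
    _ = S := by
        rw [mul_comm, mul_div_assoc, ENNReal.div_self (by exact_mod_cast hx.ne')
          (ENNReal.natCast_ne_top x), mul_one]


end
end

section
/- Let f be a real, strongly additive function such that the series Σ_p min(1, f(p)²)/p and Σ_{p : |f(p)|≤1} f(p)/p converge. Suppose 0 < v ≤ 1, 3 ≤ R ≤ e^{1/v}, T ≥ 1, 1 + |τ| ≤ T and T²·η_f(R) ≤ log(1/v). Then, for x ≥ 3, |L(0; x) − L(τ; x)| ≤ 4·log(1/v) + O(1), where L(τ; x) := Σ_{p ≤ x} e^{iτ f_R(p)}/(p−1) and the implied constant is absolute. -/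
open Filter Topology Finset MeasureTheory
open scoped Classical

noncomputable section

/-- L(τ; x) := Σ_{p ≤ x} e^{iτ f_R(p)}/(p − 1). -/
def Lfn (f : ℕ → ℝ) (R : ℝ) (τ x : ℝ) : ℂ :=
  ∑ p ∈ (Finset.range (⌊x⌋₊ + 1)).filter Nat.Prime,
    Complex.exp ((τ * fR f R p : ℝ) * Complex.I) / ((p : ℂ) - 1)


lemma sin_ge_sub_sq_div_two {t : ℝ} (ht : 0 ≤ t) : t - t^2/2 ≤ Real.sin t := by
  have key : ∀ s : ℝ, 0 ≤ s → (fun u : ℝ => Real.sin u - u + u^2/2) 0 ≤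
      (fun u : ℝ => Real.sin u - u + u^2/2) s := by
    intro s hs
    have hmono : MonotoneOn (fun u : ℝ => Real.sin u - u + u^2/2) (Set.Ici 0) := by
      apply monotoneOn_of_deriv_nonneg (convex_Ici 0)
      · fun_prop
      · intro u hu
        apply DifferentiableAt.differentiableWithinAt
        fun_prop
      · intro u hu
        have : HasDerivAt (fun u : ℝ => Real.sin u - u + u^2/2) (Real.cos u - 1 + u) u := by
          have h1 : HasDerivAt Real.sin (Real.cos u) u := Real.hasDerivAt_sin u
          have h2 : HasDerivAt (fun u : ℝ => u) 1 u := hasDerivAt_id u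
          have h3 : HasDerivAt (fun u : ℝ => u^2/2) u u := by
            have := (hasDerivAt_pow 2 u).div_const 2
            simpa using this
          exact (h1.sub h2).add h3
        rw [this.deriv]
        rw [interior_Ici, Set.mem_Ioi] at hu
        rcases le_or_gt u 2 with h2 | h2
        · nlinarith [Real.one_sub_sq_div_two_le_cos (x := u), hu.le]
        · nlinarith [Real.neg_one_le_cos u]
    exact hmono (Set.mem_Ici.2 le_rfl) (Set.mem_Ici.2 hs) hs
  have := key t ht
  simp at this
  nlinarith [this]

lemma norm_exp_sub_one_sub_mul_I_le (t : ℝ) :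
    ‖Complex.exp (t * Complex.I) - 1 - t * Complex.I‖ ≤ t^2 := by
  have hre : (Complex.exp (t * Complex.I) - 1 - t * Complex.I).re = Real.cos t - 1 := by
    simp [Complex.exp_ofReal_mul_I_re]
  have him : (Complex.exp (t * Complex.I) - 1 - t * Complex.I).im = Real.sin t - t := by
    simp [Complex.exp_ofReal_mul_I_im]
  have h := Complex.norm_le_abs_re_add_abs_im (Complex.exp (t * Complex.I) - 1 - t * Complex.I)
  rw [hre, him] at h
  have h1 : |Real.cos t - 1| ≤ t^2/2 := by
    rw [abs_sub_comm, abs_of_nonneg (by nlinarith [Real.cos_le_one t])]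
    nlinarith [Real.one_sub_sq_div_two_le_cos (x := t)]
  have h2 : |Real.sin t - t| ≤ t^2/2 := by
    rcases le_or_gt 0 t with ht | ht
    · rw [abs_sub_comm, abs_of_nonneg (by nlinarith [Real.sin_le ht])]
      nlinarith [sin_ge_sub_sq_div_two ht]
    · have h3 : Real.sin (-t) - (-t) ≤ 0 := by nlinarith [Real.sin_le (neg_nonneg.2 ht.le)]
      have h4 : (-t) - (-t)^2/2 ≤ Real.sin (-t) := sin_ge_sub_sq_div_two (neg_nonneg.2 ht.le)
      rw [Real.sin_neg] at h3 h4
      rw [abs_le]; constructor <;> nlinarith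
  calc ‖Complex.exp (t * Complex.I) - 1 - t * Complex.I‖ ≤ |Real.cos t - 1| + |Real.sin t - t| := h
    _ ≤ t^2 := by linarith


lemma tele (u : ℕ → ℝ) (N : ℕ) :
    ∑ i ∈ Finset.range N, (if 2 ≤ i then u i - u (i+1) else 0)
      = if 2 ≤ N then u 2 - u N else 0 := by
  induction N with
  | zero => simp
  | succ n ih =>
    rw [Finset.sum_range_succ, ih]
    rcases Nat.lt_or_ge n 2 with h | h
    · interval_cases n <;> simp
    · have h2 : 2 ≤ n + 1 := by omega
      simp only [h, h2, if_pos]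
      ring

lemma theta_bound (n : ℕ) :
    ∑ i ∈ Finset.range (n+1), (if i.Prime then Real.log i else 0) ≤ n * Real.log 4 := by
  have h1 : ∑ i ∈ Finset.range (n+1), (if i.Prime then Real.log i else 0)
      = Real.log ((primorial n : ℕ) : ℝ) := by
    rw [← Finset.sum_filter, primorial]
    push_cast
    rw [Real.log_prod]
    intro i hi
    have : i.Prime := (Finset.mem_filter.1 hi).2
    exact_mod_cast this.ne_zero
  rw [h1]
  calc Real.log ((primorial n : ℕ) : ℝ) ≤ Real.log ((4:ℝ)^n) := by
        apply Real.log_le_log (by exact_mod_cast primorial_pos n)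
        exact_mod_cast primorial_le_4_pow n
    _ = n * Real.log 4 := by rw [Real.log_pow]

lemma log_two_half : (1/2 : ℝ) ≤ Real.log 2 := by
  have := Real.log_two_gt_d9
  linarith

lemma log_three_one : (1 : ℝ) ≤ Real.log 3 := by
  rw [Real.le_log_iff_exp_le (by norm_num)]
  have := Real.exp_one_lt_d9
  linarith

lemma log_four_le : Real.log 4 ≤ 1.4 := by
  have h4 : (4:ℝ) = 2^2 := by norm_num
  rw [h4, Real.log_pow]
  have := Real.log_two_lt_d9
  push_cast
  linarith

-- integral comparison : sum of 1/(i log i) for i = 3..N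
lemma sum_w_le {N : ℕ} (hN : 3 ≤ N) :
    ∑ i ∈ Finset.Ico 2 N, (1 / (((i:ℝ)+1) * Real.log ((i:ℝ)+1)))
      ≤ Real.log (Real.log N) + 1 := by
  have h2N : (2:ℕ) ≤ N := by omega
  have key : ∑ i ∈ Finset.Ico 2 N, (fun t : ℝ => 1 / (t * Real.log t)) (((i + 1 : ℕ) : ℝ))
      ≤ ∫ t in ((2:ℕ):ℝ)..((N:ℕ):ℝ), (fun t : ℝ => 1 / (t * Real.log t)) t := by
    apply AntitoneOn.sum_le_integral_Ico (f := fun t : ℝ => 1 / (t * Real.log t)) h2N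
    intro s hs t ht hst
    have hs2 : (2:ℝ) ≤ s := by exact_mod_cast hs.1
    have hslog : (0:ℝ) < Real.log s := lt_of_lt_of_le (by linarith [log_two_half]) (Real.log_le_log (by norm_num) hs2)
    have htlog : Real.log s ≤ Real.log t := Real.log_le_log (by linarith) hst
    apply one_div_le_one_div_of_le
    · positivity
    · apply mul_le_mul hst htlog hslog.le (by linarith)
  have hFTC : ∫ t in ((2:ℕ):ℝ)..((N:ℕ):ℝ), 1 / (t * Real.log t)
      = Real.log (Real.log N) - Real.log (Real.log 2) := by
    have hle : ((2:ℕ):ℝ) ≤ ((N:ℕ):ℝ) := by exact_mod_cast h2N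
    apply intervalIntegral.integral_eq_sub_of_hasDerivAt (f := fun t : ℝ => Real.log (Real.log t))
    · intro t ht
      rw [Set.uIcc_of_le hle] at ht
      have ht2 : (2:ℝ) ≤ t := by exact_mod_cast ht.1
      have htpos : (0:ℝ) < t := by linarith
      have hlogpos : (0:ℝ) < Real.log t :=
        lt_of_lt_of_le (by linarith [log_two_half]) (Real.log_le_log (by norm_num) ht2)
      have h := (Real.hasDerivAt_log hlogpos.ne').comp t (Real.hasDerivAt_log htpos.ne')
      rw [show 1 / (t * Real.log t) = (Real.log t)⁻¹ * t⁻¹ by ring]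
      exact h
    · apply ContinuousOn.intervalIntegrable
      apply ContinuousOn.div continuousOn_const
      · apply ContinuousOn.mul continuousOn_id
        apply Real.continuousOn_log.mono
        intro t ht
        rw [Set.uIcc_of_le hle] at ht
        have : (2:ℝ) ≤ t := by exact_mod_cast ht.1
        simp only [Set.mem_compl_iff, Set.mem_singleton_iff]
        intro h; rw [h] at this; norm_num at this
      · intro t ht
        rw [Set.uIcc_of_le hle] at ht
        have ht2 : (2:ℝ) ≤ t := by exact_mod_cast ht.1
        have hlogpos : (0:ℝ) < Real.log t :=
          lt_of_lt_of_le (by linarith [log_two_half]) (Real.log_le_log (by norm_num) ht2)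
        positivity
  have hlog2 : Real.log (Real.log 2) ≥ -1 := by
    have h1 : Real.exp (-1) ≤ Real.log 2 := by
      have h2 : Real.exp (-1) = 1 / Real.exp 1 := by
        rw [Real.exp_neg]; rw [inv_eq_one_div]
      have h3 : (2:ℝ) ≤ Real.exp 1 := by
        have := Real.exp_one_gt_d9; linarith
      have : Real.exp (-1) ≤ 1/2 := by
        rw [h2]
        apply div_le_div_of_nonneg_left (by norm_num) (by norm_num) h3
      linarith [log_two_half]
    calc (-1 : ℝ) = Real.log (Real.exp (-1)) := (Real.log_exp _).symm
      _ ≤ Real.log (Real.log 2) := Real.log_le_log (Real.exp_pos _) h1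
  calc ∑ i ∈ Finset.Ico 2 N, (1 / (((i:ℝ)+1) * Real.log ((i:ℝ)+1)))
      ≤ ∫ t in ((2:ℕ):ℝ)..((N:ℕ):ℝ), 1 / (t * Real.log t) := by
        refine le_trans (le_of_eq ?_) key
        apply Finset.sum_congr rfl
        intro i _
        push_cast
        ring_nf
    _ = Real.log (Real.log N) - Real.log (Real.log 2) := hFTC
    _ ≤ Real.log (Real.log N) + 1 := by linarith

lemma mertens {N : ℕ} (hN : 3 ≤ N) :
    ∑ p ∈ (Finset.range (N+1)).filter Nat.Prime, 1/((p:ℝ)-1)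
      ≤ Real.log 4 * Real.log (Real.log N) + 9 := by
  set w : ℕ → ℝ := fun i => 1/((i:ℝ) * Real.log i) with hw
  set a : ℕ → ℝ := fun i => if i.Prime then Real.log i else 0 with ha
  have hw0 : w 0 = 0 := by simp [hw]
  have hw1 : w 1 = 0 := by simp [hw]
  have hwnn : ∀ i, 0 ≤ w i := by
    intro i
    rcases Nat.eq_zero_or_pos i with h | h
    · simp [h, hw]
    · have : (0:ℝ) ≤ Real.log i := Real.log_natCast_nonneg i
      simp only [hw]
      positivity
  have hlogpos : ∀ i : ℕ, 2 ≤ i → (0:ℝ) < Real.log i := by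
    intro i hi
    have : (2:ℝ) ≤ (i:ℝ) := by exact_mod_cast hi
    linarith [Real.log_le_log (by norm_num) this, log_two_half]
  -- prime term decomposition
  have hprime_term : ∀ p : ℕ, p.Prime →
      1/((p:ℝ)-1) = w p * a p + (1/((p:ℝ)-1) - 1/(p:ℝ)) := by
    intro p hp
    have h2 : (2:ℝ) ≤ (p:ℝ) := by exact_mod_cast hp.two_le
    have hlp : (0:ℝ) < Real.log p := hlogpos p hp.two_le
    simp only [hw, ha, if_pos hp]
    field_simp
    ring
  -- split the sum
  have hsplit : ∑ p ∈ (Finset.range (N+1)).filter Nat.Prime, 1/((p:ℝ)-1)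
      = (∑ i ∈ Finset.range (N+1), w i * a i)
        + ∑ p ∈ (Finset.range (N+1)).filter Nat.Prime, (1/((p:ℝ)-1) - 1/(p:ℝ)) := by
    have h2 : ∑ i ∈ Finset.range (N+1), w i * a i
        = ∑ p ∈ (Finset.range (N+1)).filter Nat.Prime, w p * a p := by
      rw [Finset.sum_filter]
      apply Finset.sum_congr rfl
      intro i _
      by_cases hi : i.Prime
      · simp [hi]
      · simp [ha, hi]
    rw [h2, ← Finset.sum_add_distrib]
    apply Finset.sum_congr rfl
    intro p hp
    exact hprime_term p (Finset.mem_filter.1 hp).2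
  -- the telescoping remainder
  have hrem : ∑ p ∈ (Finset.range (N+1)).filter Nat.Prime, (1/((p:ℝ)-1) - 1/(p:ℝ)) ≤ 1 := by
    have h1 : ∑ p ∈ (Finset.range (N+1)).filter Nat.Prime, (1/((p:ℝ)-1) - 1/(p:ℝ))
        ≤ ∑ i ∈ Finset.range (N+1),
          (if 2 ≤ i then (fun j : ℕ => 1/((j:ℝ)-1)) i - (fun j : ℕ => 1/((j:ℝ)-1)) (i+1) else 0) := by
      rw [Finset.sum_filter]
      apply Finset.sum_le_sum
      intro i _
      by_cases hi : i.Prime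
      · have h2 : 2 ≤ i := hi.two_le
        have h2r : (2:ℝ) ≤ (i:ℝ) := by exact_mod_cast h2
        rw [if_pos hi, if_pos h2]
        apply le_of_eq
        push_cast
        field_simp
        have h1 : (i:ℝ) - 1 ≠ 0 := by linarith
        have h0 : (i:ℝ) ≠ 0 := by linarith
        rw [add_sub_cancel_right]
        field_simp
      · rw [if_neg hi]
        by_cases h2 : 2 ≤ i
        · rw [if_pos h2]
          have h2r : (2:ℝ) ≤ (i:ℝ) := by exact_mod_cast h2
          simp only []
          have : (1:ℝ)/((i:ℝ)+1-1) ≤ 1/((i:ℝ)-1) := by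
            apply one_div_le_one_div_of_le <;> linarith
          push_cast
          linarith
        · rw [if_neg h2]
    rw [tele] at h1
    have h2N1 : 2 ≤ N + 1 := by omega
    rw [if_pos h2N1] at h1
    have hNr : (3:ℝ) ≤ (N:ℝ) := by exact_mod_cast hN
    have hNinv : (0:ℝ) ≤ ((N:ℝ))⁻¹ := by positivity
    push_cast at h1
    norm_num at h1 ⊢
    linarith
  -- summation by parts
  have hBP : ∑ i ∈ Finset.range (N+1), w i * a i
      = w N * (∑ i ∈ Finset.range (N+1), a i)
        - ∑ i ∈ Finset.range N, (w (i+1) - w i) * (∑ j ∈ Finset.range (i+1), a j) := by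
    have := Finset.sum_range_by_parts w a (N+1)
    simpa [smul_eq_mul] using this
  have hterm1 : w N * (∑ i ∈ Finset.range (N+1), a i) ≤ Real.log 4 := by
    have hth := theta_bound N
    have hwN : 0 ≤ w N := hwnn N
    have hNpos : (0:ℝ) < (N:ℝ) := by positivity
    have hlogN : (1:ℝ) ≤ Real.log N := by
      calc (1:ℝ) ≤ Real.log 3 := log_three_one
        _ ≤ Real.log N := Real.log_le_log (by norm_num) (by exact_mod_cast hN)
    have h1 : w N * (∑ i ∈ Finset.range (N+1), a i) ≤ w N * ((N:ℝ) * Real.log 4) := by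
      apply mul_le_mul_of_nonneg_left _ hwN
      exact hth
    have h2 : w N * ((N:ℝ) * Real.log 4) = (1/Real.log N) * Real.log 4 := by
      simp only [hw]
      field_simp
    have h3 : (1/Real.log N) * Real.log 4 ≤ Real.log 4 := by
      have hl4 : (0:ℝ) ≤ Real.log 4 := Real.log_nonneg (by norm_num)
      have : 1/Real.log N ≤ 1 := by
        rw [div_le_one (by linarith)]; linarith
      nlinarith
    linarith
  have hterm2 : - ∑ i ∈ Finset.range N, (w (i+1) - w i) * (∑ j ∈ Finset.range (i+1), a j)
      ≤ Real.log 4 * Real.log (Real.log N) + 3 * Real.log 4 := by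
    have hl4 : (0:ℝ) ≤ Real.log 4 := Real.log_nonneg (by norm_num)
    set u : ℕ → ℝ := fun i => 1/Real.log i with hu
    have hstep : ∀ i ∈ Finset.range N, -((w (i+1) - w i) * (∑ j ∈ Finset.range (i+1), a j))
        ≤ Real.log 4 * (if 2 ≤ i then (u i - u (i+1)) + w (i+1) else 0) := by
      intro i _
      by_cases h2 : 2 ≤ i
      · rw [if_pos h2]
        have h2r : (2:ℝ) ≤ (i:ℝ) := by exact_mod_cast h2
        have hlogi : (0:ℝ) < Real.log i := hlogpos i h2
        have hlogi1 : (0:ℝ) < Real.log (i+1) := by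
          have := hlogpos (i+1) (by omega)
          push_cast at this ⊢
          linarith
        have hmono : w (i+1) ≤ w i := by
          simp only [hw]
          apply one_div_le_one_div_of_le
          · positivity
          · push_cast
            apply mul_le_mul (by linarith) (by linarith [Real.log_le_log (by linarith : (0:ℝ) < (i:ℝ)) (by linarith : (i:ℝ) ≤ (i:ℝ)+1)]) hlogi.le (by linarith)
        have hthle : (∑ j ∈ Finset.range (i+1), a j) ≤ (i:ℝ) * Real.log 4 := theta_bound i
        have hthnn : 0 ≤ ∑ j ∈ Finset.range (i+1), a j := by
          apply Finset.sum_nonneg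
          intro j _
          simp only [ha]
          by_cases hj : j.Prime
          · rw [if_pos hj]
            exact Real.log_natCast_nonneg j
          · rw [if_neg hj]
        have hkey : (w i - w (i+1)) * (i:ℝ) = (u i - u (i+1)) + w (i+1) := by
          simp only [hw, hu]
          have hipos : (0:ℝ) < (i:ℝ) := by linarith
          push_cast
          field_simp
          ring
        calc -((w (i+1) - w i) * (∑ j ∈ Finset.range (i+1), a j))
            = (w i - w (i+1)) * (∑ j ∈ Finset.range (i+1), a j) := by ring
          _ ≤ (w i - w (i+1)) * ((i:ℝ) * Real.log 4) := by
              apply mul_le_mul_of_nonneg_left hthle (by linarith)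
          _ = Real.log 4 * ((u i - u (i+1)) + w (i+1)) := by
              rw [← hkey]; ring
      · rw [if_neg h2]
        interval_cases i
        · simp [hw0, hw1]
        · have hth2 : (∑ j ∈ Finset.range 2, a j) = 0 := by
            simp [ha, Finset.sum_range_succ]
          rw [hth2]
          simp
    have hsum := Finset.sum_le_sum hstep
    rw [Finset.sum_neg_distrib, ← Finset.mul_sum] at hsum
    have hsplit2 : ∑ i ∈ Finset.range N, (if 2 ≤ i then (u i - u (i+1)) + w (i+1) else 0)
        = (∑ i ∈ Finset.range N, (if 2 ≤ i then u i - u (i+1) else 0))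
          + ∑ i ∈ Finset.range N, (if 2 ≤ i then w (i+1) else 0) := by
      rw [← Finset.sum_add_distrib]
      apply Finset.sum_congr rfl
      intro i _
      by_cases h2 : 2 ≤ i <;> simp [h2]
    have htele : ∑ i ∈ Finset.range N, (if 2 ≤ i then u i - u (i+1) else 0) ≤ 2 := by
      rw [tele]
      rw [if_pos (by omega : 2 ≤ N)]
      have huN : 0 ≤ u N := by
        simp only [hu]
        have := hlogpos N (by omega)
        positivity
      have hu2 : u 2 ≤ 2 := by
        simp only [hu]
        push_cast
        rw [div_le_iff₀ (by linarith [log_two_half] : (0:ℝ) < Real.log 2)]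
        linarith [log_two_half]
      linarith
    have hwshift : ∑ i ∈ Finset.range N, (if 2 ≤ i then w (i+1) else 0)
        ≤ Real.log (Real.log N) + 1 := by
      have hfe : (Finset.range N).filter (fun i => 2 ≤ i) = Finset.Ico 2 N := by
        ext i
        simp [Finset.mem_filter, Finset.mem_range, Finset.mem_Ico]
        omega
      rw [← Finset.sum_filter, hfe]
      have : ∀ i ∈ Finset.Ico 2 N, w (i+1) = 1 / (((i:ℝ)+1) * Real.log ((i:ℝ)+1)) := by
        intro i _
        simp only [hw]
        push_cast
        ring_nf
      rw [Finset.sum_congr rfl this]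
      exact sum_w_le hN
    calc - ∑ i ∈ Finset.range N, (w (i+1) - w i) * (∑ j ∈ Finset.range (i+1), a j)
        ≤ Real.log 4 * ∑ i ∈ Finset.range N, (if 2 ≤ i then (u i - u (i+1)) + w (i+1) else 0) := hsum
      _ ≤ Real.log 4 * (2 + (Real.log (Real.log N) + 1)) := by
          apply mul_le_mul_of_nonneg_left _ hl4
          rw [hsplit2]
          linarith
      _ = Real.log 4 * Real.log (Real.log N) + 3 * Real.log 4 := by ring
  have hl4' : Real.log 4 ≤ 1.4 := log_four_le
  have hl4 : (0:ℝ) ≤ Real.log 4 := Real.log_nonneg (by norm_num)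
  calc ∑ p ∈ (Finset.range (N+1)).filter Nat.Prime, 1/((p:ℝ)-1)
      = ∑ i ∈ Finset.range (N+1), w i * a i
        + ∑ p ∈ (Finset.range (N+1)).filter Nat.Prime, (1/((p:ℝ)-1) - 1/(p:ℝ)) := hsplit
    _ ≤ (w N * (∑ i ∈ Finset.range (N+1), a i)
        - ∑ i ∈ Finset.range N, (w (i+1) - w i) * (∑ j ∈ Finset.range (i+1), a j)) + 1 := by
        rw [← hBP]; linarith
    _ ≤ (Real.log 4 + (Real.log 4 * Real.log (Real.log N) + 3 * Real.log 4)) + 1 := by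
        have := hterm1
        have := hterm2
        linarith
    _ ≤ Real.log 4 * Real.log (Real.log N) + 9 := by linarith

lemma eta_nonneg {f : ℕ → ℝ} {η : ℝ → ℝ} (hη : EtaBound f η) (y : ℝ) : 0 ≤ η y := by
  apply le_of_tendsto hη.2.2.1
  filter_upwards [eventually_ge_atTop y] with z hz
  exact hη.2.1 hz

lemma fR_prime (f : ℕ → ℝ) (R : ℝ) {p : ℕ} (hp : p.Prime) :
    fR f R p = if (p:ℝ) ≤ R ∨ |f p| ≤ 1 then f p else 0 := by
  unfold fR
  rw [Nat.Prime.primeFactors hp, Finset.sum_singleton, Nat.Prime.factorization_self hp, pow_one]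

-- linear tail bound
lemma linear_bound {f : ℕ → ℝ} {η : ℝ → ℝ} (hη : EtaBound f η) {R x : ℝ}
    (hR : 1 ≤ R) (hx : R ≤ x) :
    |∑ p ∈ (Finset.range (⌊x⌋₊+1)).filter
        (fun p => Nat.Prime p ∧ R < (p:ℝ) ∧ |f p| ≤ 1), f p / (p:ℝ)| ≤ 2 * η R := by
  obtain ⟨ℓR, hℓR, hbR⟩ := hη.2.2.2.1 R hR
  obtain ⟨ℓx, hℓx, hbx⟩ := hη.2.2.2.1 x (le_trans hR hx)
  have hx0 : (0:ℝ) ≤ x := by linarith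
  set S := ∑ p ∈ (Finset.range (⌊x⌋₊+1)).filter
      (fun p => Nat.Prime p ∧ R < (p:ℝ) ∧ |f p| ≤ 1), f p / (p:ℝ) with hS
  have hconst : ∀ N : ℕ, ⌊x⌋₊ + 1 ≤ N →
      (∑ p ∈ (Finset.range N).filter (fun p => Nat.Prime p ∧ R < (p:ℝ) ∧ |f p| ≤ 1),
        f p / (p:ℝ))
      - (∑ p ∈ (Finset.range N).filter (fun p => Nat.Prime p ∧ x < (p:ℝ) ∧ |f p| ≤ 1),
        f p / (p:ℝ)) = S := by
    intro N hN
    have hsplit := Finset.sum_filter_add_sum_filter_not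
      ((Finset.range N).filter (fun p => Nat.Prime p ∧ R < (p:ℝ) ∧ |f p| ≤ 1))
      (fun p : ℕ => x < (p:ℝ)) (fun p => f p / (p:ℝ))
    have he1 : ((Finset.range N).filter (fun p => Nat.Prime p ∧ R < (p:ℝ) ∧ |f p| ≤ 1)).filter
        (fun p : ℕ => x < (p:ℝ))
        = (Finset.range N).filter (fun p => Nat.Prime p ∧ x < (p:ℝ) ∧ |f p| ≤ 1) := by
      ext p
      simp only [Finset.mem_filter, Finset.mem_range]
      constructor
      · rintro ⟨⟨h1, h2, _, h4⟩, h5⟩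
        exact ⟨h1, h2, h5, h4⟩
      · rintro ⟨h1, h2, h3, h4⟩
        exact ⟨⟨h1, h2, lt_of_le_of_lt hx h3, h4⟩, h3⟩
    have he2 : ((Finset.range N).filter (fun p => Nat.Prime p ∧ R < (p:ℝ) ∧ |f p| ≤ 1)).filter
        (fun p : ℕ => ¬ (x < (p:ℝ)))
        = (Finset.range (⌊x⌋₊+1)).filter (fun p => Nat.Prime p ∧ R < (p:ℝ) ∧ |f p| ≤ 1) := by
      ext p
      simp only [Finset.mem_filter, Finset.mem_range, not_lt]
      constructor
      · rintro ⟨⟨h1, h2, h3, h4⟩, h5⟩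
        have : p ≤ ⌊x⌋₊ := Nat.le_floor h5
        exact ⟨by omega, h2, h3, h4⟩
      · rintro ⟨h1, h2, h3, h4⟩
        have hple : p ≤ ⌊x⌋₊ := by omega
        have : (p:ℝ) ≤ x := le_trans (by exact_mod_cast hple : (p:ℝ) ≤ (⌊x⌋₊:ℝ)) (Nat.floor_le hx0)
        exact ⟨⟨by omega, h2, h3, h4⟩, this⟩
    rw [he1, he2] at hsplit
    rw [← hsplit, hS]
    ring
  have hlim : Tendsto (fun N : ℕ =>
      (∑ p ∈ (Finset.range N).filter (fun p => Nat.Prime p ∧ R < (p:ℝ) ∧ |f p| ≤ 1),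
        f p / (p:ℝ))
      - (∑ p ∈ (Finset.range N).filter (fun p => Nat.Prime p ∧ x < (p:ℝ) ∧ |f p| ≤ 1),
        f p / (p:ℝ))) atTop (𝓝 (ℓR - ℓx)) := hℓR.sub hℓx
  have heq : S = ℓR - ℓx := by
    apply tendsto_nhds_unique _ hlim
    apply Tendsto.congr' _ tendsto_const_nhds
    filter_upwards [eventually_ge_atTop (⌊x⌋₊ + 1)] with N hN
    exact (hconst N hN).symm
  rw [heq]
  have hax : η x ≤ η R := hη.2.1 hx
  calc |ℓR - ℓx| ≤ |ℓR| + |ℓx| := abs_sub _ _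
    _ ≤ 2 * η R := by linarith




lemma summable_quad (f : ℕ → ℝ) (R : ℝ)
    (hs : Summable (fun p : Nat.Primes => min 1 (f (p:ℕ) ^ 2) / ((p:ℕ) : ℝ))) :
    Summable (fun n : ℕ => if IsPrimePow n ∧ R < (n:ℝ) then min 1 (f n ^ 2) / (n : ℝ) else 0) := by
  have hg1 : Summable (fun n : ℕ => if n.Prime then min 1 (f n ^ 2) / (n : ℝ) else 0) := by
    apply (Function.Injective.summable_iff Nat.Primes.coe_nat_injective ?_).mp
    · apply Summable.congr hs
      intro p
      exact (if_pos p.prop).symm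
    · intro n hn
      have : ¬ n.Prime := by
        intro hp
        exact hn ⟨⟨n, hp⟩, rfl⟩
      simp [this]
  have hg2 : Summable (fun n : ℕ => if IsPrimePow n ∧ ¬ n.Prime then (1:ℝ)/(n:ℝ) else 0) := by
    apply summable_of_sum_range_le (c := 2)
    · intro n
      by_cases h : IsPrimePow n ∧ ¬ n.Prime
      · rw [if_pos h]; positivity
      · rw [if_neg h]
    · intro n
      rw [← Finset.sum_filter]
      set T := (Finset.range n).filter (fun i => IsPrimePow i ∧ ¬ i.Prime) with hT
      set e : ℕ → ℕ × ℕ := fun i => (i.minFac, i.factorization i.minFac) with he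
      have hfacts : ∀ i ∈ T, (e i).1.Prime ∧ 2 ≤ (e i).2 ∧ (e i).1 ^ (e i).2 = i := by
        intro i hi
        obtain ⟨hir, hipp, hinp⟩ : i < n ∧ IsPrimePow i ∧ ¬ i.Prime := by
          have := Finset.mem_filter.1 hi
          exact ⟨Finset.mem_range.1 this.1, this.2.1, this.2.2⟩
        have h2 : 2 ≤ i := hipp.two_le
        have hp : i.minFac.Prime := Nat.minFac_prime (by omega)
        have hrec : i.minFac ^ i.factorization i.minFac = i :=
          hipp.minFac_pow_factorization_eq
        refine ⟨hp, ?_, hrec⟩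
        by_contra hk
        push_neg at hk
        have hk' : i.factorization i.minFac < 2 := hk
        rcases (by omega : i.factorization i.minFac = 0 ∨ i.factorization i.minFac = 1) with h0 | h0
        · rw [h0, pow_zero] at hrec; omega
        · rw [h0, pow_one] at hrec; rw [← hrec] at hinp; exact hinp hp
      have hinj : Set.InjOn e T := by
        intro i hi j hj hij
        have h1 := (hfacts i hi).2.2
        have h2 := (hfacts j hj).2.2
        rw [← h1, ← h2, hij]
      calc ∑ i ∈ T, (1:ℝ)/(i:ℝ) = ∑ s ∈ T.image e, 1/((s.1:ℝ)^s.2) := by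
            rw [Finset.sum_image hinj]
            apply Finset.sum_congr rfl
            intro i hi
            have := (hfacts i hi).2.2
            rw [show ((i:ℕ):ℝ) = ((((e i).1 ^ (e i).2 : ℕ)):ℝ) by rw [this]]
            push_cast
            norm_num
        _ ≤ ∑ s ∈ ((Finset.range n) ×ˢ (Finset.Ico 2 n)).filter (fun s => s.1.Prime),
              1/((s.1:ℝ)^s.2) := by
            apply Finset.sum_le_sum_of_subset_of_nonneg
            · intro s hsm
              obtain ⟨i, hi, rfl⟩ := Finset.mem_image.1 hsm
              obtain ⟨hp, hk2, hrec⟩ := hfacts i hi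
              have hin : i < n := Finset.mem_range.1 (Finset.mem_filter.1 hi).1
              have h2i : 2 ≤ i := (Finset.mem_filter.1 hi).2.1.two_le
              have hpi : (e i).1 ≤ i := Nat.minFac_le (by omega)
              have hki : (e i).2 < n := by
                have h1 : (e i).2 < 2 ^ (e i).2 := Nat.lt_two_pow_self
                have h2 : 2 ^ (e i).2 ≤ (e i).1 ^ (e i).2 :=
                  Nat.pow_le_pow_left hp.two_le _
                omega
              exact Finset.mem_filter.2 ⟨Finset.mem_product.2
                ⟨Finset.mem_range.2 (by omega), Finset.mem_Ico.2 ⟨hk2, hki⟩⟩, hp⟩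
            · intro s _ _
              positivity
        _ ≤ 2 := by
            rw [Finset.sum_filter, Finset.sum_product]
            set u : ℕ → ℝ := fun i => 2/((i:ℝ)-1) with hu
            have hinner : ∀ p ∈ Finset.range n, (∑ k ∈ Finset.Ico 2 n,
                (if p.Prime then 1/((p:ℝ)^k) else 0))
                ≤ (if 2 ≤ p then u p - u (p+1) else 0) := by
              intro p _
              have huval : ∀ q : ℕ, 2 ≤ q → u q - u (q+1) = 2/((q:ℝ)*((q:ℝ)-1)) := by
                intro q hq
                have hq2 : (2:ℝ) ≤ (q:ℝ) := by exact_mod_cast hq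
                have hq0 : ((q:ℝ)) ≠ 0 := by linarith
                have hq1 : ((q:ℝ)) - 1 ≠ 0 := by linarith
                simp only [hu]
                push_cast
                rw [add_sub_cancel_right]
                field_simp
                ring
              by_cases hp : p.Prime
              · rw [if_pos hp.two_le, huval p hp.two_le]
                have hp2 : (2:ℝ) ≤ (p:ℝ) := by exact_mod_cast hp.two_le
                have h1 : ∀ k ∈ Finset.Ico 2 n, (if p.Prime then 1/((p:ℝ)^k) else 0)
                    ≤ (1/((p:ℝ)^2)) * (1/2:ℝ)^(k-2) := by
                  intro k hk
                  obtain ⟨hk2, _⟩ := Finset.mem_Ico.1 hk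
                  rw [if_pos hp, one_div_pow, div_mul_div_comm, one_mul]
                  apply one_div_le_one_div_of_le (by positivity)
                  calc (p:ℝ)^2 * 2^(k-2) ≤ (p:ℝ)^2 * (p:ℝ)^(k-2) := by
                        apply mul_le_mul_of_nonneg_left _ (by positivity)
                        exact pow_le_pow_left₀ (by norm_num) hp2 _
                    _ = (p:ℝ)^k := by
                        rw [← pow_add]
                        congr 1
                        omega
                calc ∑ k ∈ Finset.Ico 2 n, (if p.Prime then 1/((p:ℝ)^k) else 0)
                    ≤ ∑ k ∈ Finset.Ico 2 n, (1/((p:ℝ)^2)) * (1/2:ℝ)^(k-2) :=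
                      Finset.sum_le_sum h1
                  _ = (1/((p:ℝ)^2)) * ∑ k ∈ Finset.Ico 2 n, (1/2:ℝ)^(k-2) := by
                      rw [Finset.mul_sum]
                  _ ≤ (1/((p:ℝ)^2)) * 2 := by
                      apply mul_le_mul_of_nonneg_left _ (by positivity)
                      rw [Finset.sum_Ico_eq_sum_range]
                      have hre : ∀ i ∈ Finset.range (n-2), (1/2:ℝ)^(2+i-2) = (1/2:ℝ)^i := by
                        intro i _
                        congr 1
                        omega
                      rw [Finset.sum_congr rfl hre]
                      exact sum_geometric_two_le _
                  _ ≤ 2/((p:ℝ)*((p:ℝ)-1)) := by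
                      rw [one_div_mul_eq_div]
                      apply div_le_div_of_nonneg_left (by norm_num) (by nlinarith) (by nlinarith)
              · have hz : ∀ k ∈ Finset.Ico 2 n, (if p.Prime then 1/((p:ℝ)^k) else 0) = 0 := by
                  intro k _
                  rw [if_neg hp]
                rw [Finset.sum_congr rfl hz, Finset.sum_const_zero]
                by_cases h2 : 2 ≤ p
                · rw [if_pos h2, huval p h2]
                  have hp2 : (2:ℝ) ≤ (p:ℝ) := by exact_mod_cast h2
                  apply div_nonneg (by norm_num)
                  nlinarith
                · rw [if_neg h2]
            calc ∑ p ∈ Finset.range n, ∑ k ∈ Finset.Ico 2 n,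
                  (if p.Prime then 1/((p:ℝ)^k) else 0)
                ≤ ∑ p ∈ Finset.range n, (if 2 ≤ p then u p - u (p+1) else 0) :=
                  Finset.sum_le_sum hinner
              _ = if 2 ≤ n then u 2 - u n else 0 := tele u n
              _ ≤ 2 := by
                  by_cases h2 : 2 ≤ n
                  · rw [if_pos h2]
                    have hn2 : (2:ℝ) ≤ (n:ℝ) := by exact_mod_cast h2
                    have h1 : 0 ≤ u n := by
                      simp only [hu]
                      apply div_nonneg (by norm_num)
                      linarith
                    have h2' : u 2 = 2 := by
                      simp only [hu]
                      norm_num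
                    linarith
                  · rw [if_neg h2]; norm_num
  apply Summable.of_nonneg_of_le _ _ (hg1.add hg2)
  · intro n
    by_cases h : IsPrimePow n ∧ R < (n:ℝ)
    · rw [if_pos h]
      have h1 : (0:ℝ) ≤ min 1 (f n ^ 2) := le_min (by norm_num) (sq_nonneg _)
      exact div_nonneg h1 (Nat.cast_nonneg n)
    · rw [if_neg h]
  · intro n
    have hg1nn : (0:ℝ) ≤ (if n.Prime then min 1 (f n ^ 2) / (n:ℝ) else 0) := by
      by_cases hp : n.Prime
      · rw [if_pos hp]
        exact div_nonneg (le_min (by norm_num) (sq_nonneg _)) (Nat.cast_nonneg n)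
      · rw [if_neg hp]
    have hg2nn : (0:ℝ) ≤ (if IsPrimePow n ∧ ¬ n.Prime then (1:ℝ)/(n:ℝ) else 0) := by
      by_cases hq : IsPrimePow n ∧ ¬ n.Prime
      · rw [if_pos hq]
        positivity
      · rw [if_neg hq]
    by_cases h : IsPrimePow n ∧ R < (n:ℝ)
    · rw [if_pos h]
      have hmin1 : min 1 (f n ^ 2) ≤ 1 := min_le_left _ _
      have h2 : 2 ≤ n := h.1.two_le
      have hn0 : (0:ℝ) < (n:ℝ) := by exact_mod_cast (by omega : 0 < n)
      by_cases hp : n.Prime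
      · rw [if_pos hp]
        linarith
      · rw [if_neg hp, if_pos ⟨h.1, hp⟩]
        have h3 : min 1 (f n ^ 2)/(n:ℝ) ≤ 1/(n:ℝ) := by
          gcongr
        linarith
    · rw [if_neg h]
      linarith


lemma quad_bound {f : ℕ → ℝ} {η : ℝ → ℝ} (hη : EtaBound f η)
    (hs : Summable (fun p : Nat.Primes => min 1 (f (p:ℕ) ^ 2) / ((p:ℕ) : ℝ)))
    {R : ℝ} (hR : 1 ≤ R) (s : Finset ℕ)
    (hmem : ∀ p ∈ s, Nat.Prime p ∧ R < (p:ℝ) ∧ |f p| ≤ 1) :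
    ∑ p ∈ s, (f p)^2/(p:ℝ) ≤ η R := by
  have hsummable := summable_quad f R hs
  have hcongr : ∀ p ∈ s, (f p)^2/(p:ℝ)
      = (if IsPrimePow p ∧ R < (p:ℝ) then min 1 (f p ^ 2) / (p : ℝ) else 0) := by
    intro p hp
    obtain ⟨h1, h2, h3⟩ := hmem p hp
    rw [if_pos ⟨h1.isPrimePow, h2⟩]
    congr 1
    rw [min_eq_right]
    calc f p ^ 2 = |f p|^2 := (sq_abs _).symm
      _ ≤ 1 := by nlinarith [abs_nonneg (f p)]
  rw [Finset.sum_congr rfl hcongr]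
  refine le_trans (hsummable.sum_le_tsum s ?_) (hη.2.2.2.2 R hR)
  intro i _
  by_cases h : IsPrimePow i ∧ R < (i:ℝ)
  · rw [if_pos h]
    exact div_nonneg (le_min (by norm_num) (sq_nonneg _)) (Nat.cast_nonneg i)
  · rw [if_neg h]

lemma sum_pp_le {K : ℕ} (s : Finset ℕ) (hsub : s ⊆ Finset.range K)
    (hs : ∀ p ∈ s, 2 ≤ p) :
    ∑ p ∈ s, 1/((p:ℝ)*((p:ℝ)-1)) ≤ 1 := by
  set u : ℕ → ℝ := fun i => 1/((i:ℝ)-1) with hu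
  have huval : ∀ q : ℕ, 2 ≤ q → u q - u (q+1) = 1/((q:ℝ)*((q:ℝ)-1)) := by
    intro q hq
    have hq2 : (2:ℝ) ≤ (q:ℝ) := by exact_mod_cast hq
    have hq0 : ((q:ℝ)) ≠ 0 := by linarith
    have hq1 : ((q:ℝ)) - 1 ≠ 0 := by linarith
    simp only [hu]
    push_cast
    rw [add_sub_cancel_right]
    field_simp
    ring
  have h1 : ∑ p ∈ s, 1/((p:ℝ)*((p:ℝ)-1))
      = ∑ p ∈ s, (if 2 ≤ p then u p - u (p+1) else 0) := by
    apply Finset.sum_congr rfl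
    intro p hp
    rw [if_pos (hs p hp), huval p (hs p hp)]
  rw [h1]
  have h2 : ∑ p ∈ s, (if 2 ≤ p then u p - u (p+1) else 0)
      ≤ ∑ i ∈ Finset.range K, (if 2 ≤ i then u i - u (i+1) else 0) := by
    apply Finset.sum_le_sum_of_subset_of_nonneg hsub
    intro i _ _
    by_cases h2i : 2 ≤ i
    · rw [if_pos h2i, huval i h2i]
      have : (2:ℝ) ≤ (i:ℝ) := by exact_mod_cast h2i
      apply div_nonneg (by norm_num)
      nlinarith
    · rw [if_neg h2i]
  rw [tele] at h2
  refine le_trans h2 ?_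
  by_cases hK : 2 ≤ K
  · rw [if_pos hK]
    have hK2 : (2:ℝ) ≤ (K:ℝ) := by exact_mod_cast hK
    have h3 : 0 ≤ u K := by
      simp only [hu]
      apply div_nonneg (by norm_num)
      linarith
    have h4 : u 2 = 1 := by
      simp only [hu]
      norm_num
    linarith
  · rw [if_neg hK]
    norm_num

set_option maxHeartbeats 1000000 in
/-- Estimate (5.9): `|L(0; x) − L(τ; x)| ≤ 4 log(1/v) + O(1)` with absolute constant. -/
theorem L_difference_bound :
    ∃ C : ℝ, 0 < C ∧
      ∀ (f : ℕ → ℝ) (η : ℝ → ℝ), IsStronglyAdditive f → EWConv f → EtaBound f η →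
        ∀ v R T τ x : ℝ,
          0 < v → v ≤ 1 → 3 ≤ R → R ≤ Real.exp (1/v) →
          1 ≤ T → 1 + |τ| ≤ T → T^2 * η R ≤ Real.log (1/v) →
          3 ≤ x →
          ‖Lfn f R 0 x - Lfn f R τ x‖ ≤ 4 * Real.log (1/v) + C := by
  refine ⟨32, by norm_num, ?_⟩
  intro f η _hf hEW hη v R T τ x hv hv1 hR3 hRe hT hτT hTη hx3
  set L := Real.log (1/v) with hLdef
  have hv1' : (1:ℝ) ≤ 1/v := by rw [le_div_iff₀ hv]; linarith
  have hL0 : 0 ≤ L := Real.log_nonneg hv1'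
  have hR1 : (1:ℝ) ≤ R := by linarith
  have hηR : 0 ≤ η R := eta_nonneg hη R
  have hτ : |τ| ≤ T - 1 := by linarith
  have hlogR : Real.log R ≤ 1/v := by
    calc Real.log R ≤ Real.log (Real.exp (1/v)) := Real.log_le_log (by linarith) hRe
      _ = 1/v := Real.log_exp _
  have hlogR3 : (1:ℝ) ≤ Real.log R :=
    le_trans log_three_one (Real.log_le_log (by norm_num) hR3)
  have hllR : Real.log (Real.log R) ≤ L := Real.log_le_log (by linarith) hlogR
  set M := ⌊x⌋₊ with hM
  set P := (Finset.range (M + 1)).filter Nat.Prime with hP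
  set D : ℕ → ℂ := fun p =>
    (1 - Complex.exp ((τ * fR f R p : ℝ) * Complex.I)) / ((p:ℂ) - 1) with hD
  have hdiff : Lfn f R 0 x - Lfn f R τ x = ∑ p ∈ P, D p := by
    simp only [Lfn]
    rw [← Finset.sum_sub_distrib]
    apply Finset.sum_congr rfl
    intro p _
    simp only [hD]
    rw [zero_mul, Complex.ofReal_zero, zero_mul, Complex.exp_zero, sub_div]
  have hnorm1 : ∀ p : ℕ, Nat.Prime p → ‖(p:ℂ) - 1‖ = (p:ℝ) - 1 := by
    intro p hp
    have h2 : (2:ℝ) ≤ (p:ℝ) := by exact_mod_cast hp.two_le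
    have hcast : ((p:ℂ) - 1) = (((p:ℝ) - 1 : ℝ) : ℂ) := by push_cast; ring
    rw [hcast, Complex.norm_real, Real.norm_eq_abs, abs_of_nonneg (by linarith)]
  have hDnorm2 : ∀ p : ℕ, Nat.Prime p → ‖D p‖ ≤ 2 / ((p:ℝ) - 1) := by
    intro p hp
    have h2 : (2:ℝ) ≤ (p:ℝ) := by exact_mod_cast hp.two_le
    have hnum : ‖1 - Complex.exp ((τ * fR f R p : ℝ) * Complex.I)‖ ≤ 2 := by
      calc ‖1 - Complex.exp ((τ * fR f R p : ℝ) * Complex.I)‖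
          ≤ ‖(1:ℂ)‖ + ‖Complex.exp ((τ * fR f R p : ℝ) * Complex.I)‖ := norm_sub_le _ _
        _ = 2 := by
            rw [norm_one, Complex.norm_exp_ofReal_mul_I]
            norm_num
    simp only [hD]
    rw [norm_div, hnorm1 p hp]
    apply div_le_div₀ (by norm_num) hnum (by linarith) le_rfl
  -- small primes
  have hsmall : ‖∑ p ∈ P.filter (fun p : ℕ => (p:ℝ) ≤ R), D p‖
      ≤ 2 * (Real.log 4 * L + 9) := by
    have hsub : P.filter (fun p : ℕ => (p:ℝ) ≤ R)
        ⊆ (Finset.range (⌊R⌋₊ + 1)).filter Nat.Prime := by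
      intro p hp
      obtain ⟨hpP, hpR⟩ := Finset.mem_filter.1 hp
      have hprime := (Finset.mem_filter.1 hpP).2
      refine Finset.mem_filter.2 ⟨Finset.mem_range.2 ?_, hprime⟩
      have := Nat.le_floor hpR
      omega
    have hfl3 : 3 ≤ ⌊R⌋₊ := Nat.le_floor (by exact_mod_cast hR3)
    have hflR : Real.log (Real.log (⌊R⌋₊:ℝ)) ≤ Real.log (Real.log R) := by
      have h1 : (⌊R⌋₊:ℝ) ≤ R := Nat.floor_le (by linarith)
      have h2 : (3:ℝ) ≤ (⌊R⌋₊:ℝ) := by exact_mod_cast hfl3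
      have h3 : (1:ℝ) ≤ Real.log (⌊R⌋₊:ℝ) :=
        le_trans log_three_one (Real.log_le_log (by norm_num) h2)
      exact Real.log_le_log (by linarith) (Real.log_le_log (by linarith) h1)
    have hl4 : (0:ℝ) ≤ Real.log 4 := Real.log_nonneg (by norm_num)
    calc ‖∑ p ∈ P.filter (fun p : ℕ => (p:ℝ) ≤ R), D p‖
        ≤ ∑ p ∈ P.filter (fun p : ℕ => (p:ℝ) ≤ R), ‖D p‖ := norm_sum_le _ _
      _ ≤ ∑ p ∈ P.filter (fun p : ℕ => (p:ℝ) ≤ R), 2/((p:ℝ)-1) := by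
          apply Finset.sum_le_sum
          intro p hp
          exact hDnorm2 p (Finset.mem_filter.1 (Finset.mem_filter.1 hp).1).2
      _ = 2 * ∑ p ∈ P.filter (fun p : ℕ => (p:ℝ) ≤ R), 1/((p:ℝ)-1) := by
          rw [Finset.mul_sum]
          apply Finset.sum_congr rfl
          intro p _
          ring
      _ ≤ 2 * ∑ p ∈ (Finset.range (⌊R⌋₊ + 1)).filter Nat.Prime, 1/((p:ℝ)-1) := by
          apply mul_le_mul_of_nonneg_left _ (by norm_num)
          apply Finset.sum_le_sum_of_subset_of_nonneg hsub
          intro p hp _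
          have hprime := (Finset.mem_filter.1 hp).2
          have h2 : (2:ℝ) ≤ (p:ℝ) := by exact_mod_cast hprime.two_le
          apply div_nonneg (by norm_num)
          linarith
      _ ≤ 2 * (Real.log 4 * Real.log (Real.log (⌊R⌋₊:ℝ)) + 9) := by
          apply mul_le_mul_of_nonneg_left (mertens hfl3) (by norm_num)
      _ ≤ 2 * (Real.log 4 * L + 9) := by
          have h5 := le_trans hflR hllR
          nlinarith
  -- large primes
  have hbig : ‖∑ p ∈ P.filter (fun p : ℕ => ¬ ((p:ℝ) ≤ R)), D p‖ ≤ T^2 * η R + 2 := by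
    set Pb := P.filter (fun p : ℕ => ¬ ((p:ℝ) ≤ R)) with hPb
    rcases lt_or_ge x R with hxR | hxR
    · have hempty : Pb = ∅ := by
        apply Finset.eq_empty_of_forall_notMem
        intro p hp
        obtain ⟨hpP, hpR⟩ := Finset.mem_filter.1 hp
        have hpM : p ≤ M := by
          have := Finset.mem_range.1 (Finset.mem_filter.1 hpP).1
          omega
        have : (p:ℝ) ≤ x :=
          le_trans (by exact_mod_cast hpM) (Nat.floor_le (by linarith))
        exact hpR (by linarith)
      rw [hempty]
      rw [Finset.sum_empty, norm_zero]
      nlinarith [sq_nonneg T]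
    · have hsplit2 := Finset.sum_filter_add_sum_filter_not Pb (fun p : ℕ => |f p| ≤ 1) D
      set P1 := Pb.filter (fun p : ℕ => |f p| ≤ 1) with hP1
      have hzero : ∑ p ∈ Pb.filter (fun p : ℕ => ¬ |f p| ≤ 1), D p = 0 := by
        apply Finset.sum_eq_zero
        intro p hp
        obtain ⟨hpPb, hpf⟩ := Finset.mem_filter.1 hp
        obtain ⟨hpP, hpR⟩ := Finset.mem_filter.1 hpPb
        have hprime := (Finset.mem_filter.1 hpP).2
        have hfR0 : fR f R p = 0 := by
          rw [fR_prime f R hprime, if_neg]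
          push_neg
          exact ⟨not_le.1 hpR, not_le.1 hpf⟩
        simp only [hD, hfR0]
        rw [mul_zero, Complex.ofReal_zero, zero_mul, Complex.exp_zero]
        simp
      rw [← hsplit2, hzero, add_zero]
      have hP1fact : ∀ p ∈ P1, Nat.Prime p ∧ R < (p:ℝ) ∧ |f p| ≤ 1 := by
        intro p hp
        obtain ⟨hpPb, hpf⟩ := Finset.mem_filter.1 hp
        obtain ⟨hpP, hpR⟩ := Finset.mem_filter.1 hpPb
        exact ⟨(Finset.mem_filter.1 hpP).2, not_le.1 hpR, hpf⟩
      have hfRP1 : ∀ p ∈ P1, fR f R p = f p := by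
        intro p hp
        rw [fR_prime f R (hP1fact p hp).1, if_pos (Or.inr (hP1fact p hp).2.2)]
      set S := ∑ p ∈ P1, f p / (p:ℝ) with hS
      have hP1eq : P1 = (Finset.range (M+1)).filter
          (fun p => Nat.Prime p ∧ R < (p:ℝ) ∧ |f p| ≤ 1) := by
        ext p
        simp only [hP1, hPb, hP, Finset.mem_filter, Finset.mem_range, not_le]
        tauto
      have hdecomp : ∑ p ∈ P1, D p
          = (-((τ:ℂ) * Complex.I * (S:ℂ)))
            - (∑ p ∈ P1, (Complex.exp ((τ * f p : ℝ) * Complex.I) - 1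
                - (τ * f p : ℝ) * Complex.I) / (p:ℂ))
            + ∑ p ∈ P1, (1 - Complex.exp ((τ * f p : ℝ) * Complex.I))
                * (1/((p:ℂ)-1) - 1/(p:ℂ)) := by
        have hterm : ∀ p ∈ P1, D p =
            (-((τ:ℂ) * Complex.I * ((f p / (p:ℝ) : ℝ) : ℂ)))
            - (Complex.exp ((τ * f p : ℝ) * Complex.I) - 1
                - (τ * f p : ℝ) * Complex.I) / (p:ℂ)
            + (1 - Complex.exp ((τ * f p : ℝ) * Complex.I))
                * (1/((p:ℂ)-1) - 1/(p:ℂ)) := by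
          intro p hp
          obtain ⟨hprime, hpR, hpf⟩ := hP1fact p hp
          have h2 : (2:ℝ) ≤ (p:ℝ) := by exact_mod_cast hprime.two_le
          have hc0 : ((p:ℂ)) ≠ 0 := Nat.cast_ne_zero.2 hprime.ne_zero
          have hc1 : ((p:ℂ)) - 1 ≠ 0 := by
            intro hcc
            have := hnorm1 p hprime
            rw [hcc, norm_zero] at this
            linarith
          simp only [hD]
          rw [hfRP1 p hp]
          push_cast
          field_simp
          ring
        rw [Finset.sum_congr rfl hterm, Finset.sum_add_distrib, Finset.sum_sub_distrib]
        congr 2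
        rw [hS, Complex.ofReal_sum, Finset.mul_sum, ← Finset.sum_neg_distrib]
      have hSb : |S| ≤ 2 * η R := by
        rw [hS, hP1eq]
        exact linear_bound hη hR1 hxR
      have hnormA : ‖-((τ:ℂ) * Complex.I * (S:ℂ))‖ = |τ| * |S| := by
        rw [norm_neg, norm_mul, norm_mul, Complex.norm_I, Complex.norm_real,
          Complex.norm_real, Real.norm_eq_abs, Real.norm_eq_abs]
        ring
      have hnormB : ‖∑ p ∈ P1, (Complex.exp ((τ * f p : ℝ) * Complex.I) - 1
          - (τ * f p : ℝ) * Complex.I) / (p:ℂ)‖ ≤ τ^2 * η R := by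
        calc ‖∑ p ∈ P1, (Complex.exp ((τ * f p : ℝ) * Complex.I) - 1
              - (τ * f p : ℝ) * Complex.I) / (p:ℂ)‖
            ≤ ∑ p ∈ P1, ‖(Complex.exp ((τ * f p : ℝ) * Complex.I) - 1
              - (τ * f p : ℝ) * Complex.I) / (p:ℂ)‖ := norm_sum_le _ _
          _ ≤ ∑ p ∈ P1, τ^2 * ((f p)^2 / (p:ℝ)) := by
              apply Finset.sum_le_sum
              intro p hp
              have hprime := (hP1fact p hp).1
              have h2 : (2:ℝ) ≤ (p:ℝ) := by exact_mod_cast hprime.two_le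
              rw [norm_div, Complex.norm_natCast]
              have hq := norm_exp_sub_one_sub_mul_I_le (τ * f p)
              calc ‖Complex.exp ((τ * f p : ℝ) * Complex.I) - 1
                  - (τ * f p : ℝ) * Complex.I‖ / (p:ℝ) ≤ (τ * f p)^2 / (p:ℝ) :=
                    div_le_div₀ (sq_nonneg _) hq (by linarith) le_rfl
                _ = τ^2 * ((f p)^2 / (p:ℝ)) := by ring
          _ = τ^2 * ∑ p ∈ P1, (f p)^2 / (p:ℝ) := by rw [Finset.mul_sum]
          _ ≤ τ^2 * η R := by
              apply mul_le_mul_of_nonneg_left _ (sq_nonneg τ)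
              exact quad_bound hη hEW.1 hR1 P1 hP1fact
      have hnormC : ‖∑ p ∈ P1, (1 - Complex.exp ((τ * f p : ℝ) * Complex.I))
          * (1/((p:ℂ)-1) - 1/(p:ℂ))‖ ≤ 2 := by
        calc ‖∑ p ∈ P1, (1 - Complex.exp ((τ * f p : ℝ) * Complex.I))
              * (1/((p:ℂ)-1) - 1/(p:ℂ))‖
            ≤ ∑ p ∈ P1, ‖(1 - Complex.exp ((τ * f p : ℝ) * Complex.I))
              * (1/((p:ℂ)-1) - 1/(p:ℂ))‖ := norm_sum_le _ _
          _ ≤ ∑ p ∈ P1, 2 * (1/((p:ℝ)*((p:ℝ)-1))) := by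
              apply Finset.sum_le_sum
              intro p hp
              have hprime := (hP1fact p hp).1
              have h2 : (2:ℝ) ≤ (p:ℝ) := by exact_mod_cast hprime.two_le
              have hc0 : ((p:ℂ)) ≠ 0 := Nat.cast_ne_zero.2 hprime.ne_zero
              have hc1 : ((p:ℂ)) - 1 ≠ 0 := by
                intro hcc
                have := hnorm1 p hprime
                rw [hcc, norm_zero] at this
                linarith
              rw [norm_mul]
              have hn1 : ‖(1:ℂ) - Complex.exp ((τ * f p : ℝ) * Complex.I)‖ ≤ 2 := by
                calc ‖(1:ℂ) - Complex.exp ((τ * f p : ℝ) * Complex.I)‖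
                    ≤ ‖(1:ℂ)‖ + ‖Complex.exp ((τ * f p : ℝ) * Complex.I)‖ := norm_sub_le _ _
                  _ = 2 := by
                      rw [norm_one, Complex.norm_exp_ofReal_mul_I]
                      norm_num
              have hn2 : ‖1/((p:ℂ)-1) - 1/(p:ℂ)‖ = 1/((p:ℝ)*((p:ℝ)-1)) := by
                have hid : 1/((p:ℂ)-1) - 1/(p:ℂ) = 1/((p:ℂ)*((p:ℂ)-1)) := by
                  field_simp
                  ring
                rw [hid, norm_div, norm_one, norm_mul, hnorm1 p hprime, Complex.norm_natCast]
              rw [hn2]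
              apply mul_le_mul_of_nonneg_right hn1
              apply div_nonneg (by norm_num)
              nlinarith
          _ = 2 * ∑ p ∈ P1, 1/((p:ℝ)*((p:ℝ)-1)) := by rw [Finset.mul_sum]
          _ ≤ 2 * 1 := by
              apply mul_le_mul_of_nonneg_left _ (by norm_num)
              apply sum_pp_le (K := M + 1) P1
              · rw [hP1eq]
                exact Finset.filter_subset _ _
              · intro p hp
                exact (hP1fact p hp).1.two_le
          _ = 2 := by norm_num
      have hτ2 : τ^2 ≤ (T-1)^2 := by nlinarith [abs_nonneg τ, sq_abs τ]
      calc ‖∑ p ∈ P1, D p‖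
          = ‖(-((τ:ℂ) * Complex.I * (S:ℂ)))
            - (∑ p ∈ P1, (Complex.exp ((τ * f p : ℝ) * Complex.I) - 1
                - (τ * f p : ℝ) * Complex.I) / (p:ℂ))
            + ∑ p ∈ P1, (1 - Complex.exp ((τ * f p : ℝ) * Complex.I))
                * (1/((p:ℂ)-1) - 1/(p:ℂ))‖ := by rw [hdecomp]
        _ ≤ ‖(-((τ:ℂ) * Complex.I * (S:ℂ)))
            - (∑ p ∈ P1, (Complex.exp ((τ * f p : ℝ) * Complex.I) - 1
                - (τ * f p : ℝ) * Complex.I) / (p:ℂ))‖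
            + ‖∑ p ∈ P1, (1 - Complex.exp ((τ * f p : ℝ) * Complex.I))
                * (1/((p:ℂ)-1) - 1/(p:ℂ))‖ := norm_add_le _ _
        _ ≤ (‖-((τ:ℂ) * Complex.I * (S:ℂ))‖
            + ‖∑ p ∈ P1, (Complex.exp ((τ * f p : ℝ) * Complex.I) - 1
                - (τ * f p : ℝ) * Complex.I) / (p:ℂ)‖)
            + ‖∑ p ∈ P1, (1 - Complex.exp ((τ * f p : ℝ) * Complex.I))
                * (1/((p:ℂ)-1) - 1/(p:ℂ))‖ := by
              apply add_le_add_left (norm_sub_le _ _)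
        _ ≤ (|τ| * |S| + τ^2 * η R) + 2 := by
            rw [hnormA]
            exact add_le_add (add_le_add_right hnormB _) hnormC
        _ ≤ T^2 * η R + 2 := by
            have h1 : |τ| * |S| ≤ (T-1) * (2 * η R) := by
              apply mul_le_mul hτ hSb (abs_nonneg _) (by linarith)
            have h2 : τ^2 * η R ≤ (T-1)^2 * η R :=
              mul_le_mul_of_nonneg_right hτ2 hηR
            nlinarith [hηR]
  have hsum := Finset.sum_filter_add_sum_filter_not P (fun p : ℕ => (p:ℝ) ≤ R) D
  have hl4 : Real.log 4 ≤ 1.4 := log_four_le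
  have hl40 : (0:ℝ) ≤ Real.log 4 := Real.log_nonneg (by norm_num)
  calc ‖Lfn f R 0 x - Lfn f R τ x‖ = ‖∑ p ∈ P, D p‖ := by rw [hdiff]
    _ = ‖(∑ p ∈ P.filter (fun p : ℕ => (p:ℝ) ≤ R), D p)
        + ∑ p ∈ P.filter (fun p : ℕ => ¬((p:ℝ) ≤ R)), D p‖ := by rw [hsum]
    _ ≤ ‖∑ p ∈ P.filter (fun p : ℕ => (p:ℝ) ≤ R), D p‖
        + ‖∑ p ∈ P.filter (fun p : ℕ => ¬((p:ℝ) ≤ R)), D p‖ := norm_add_le _ _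
    _ ≤ 2 * (Real.log 4 * L + 9) + (T^2 * η R + 2) := add_le_add hsmall hbig
    _ ≤ 4 * L + 32 := by
        have h2 : T^2 * η R ≤ L := hTη
        nlinarith [mul_nonneg hL0 (by linarith : (0:ℝ) ≤ 1.4 - Real.log 4)]

end
end
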